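/- arXiv:1510.08124 — 2 statements merged into one kernel-verified Lean document; each statement's English description precedes it below -/
import Mathlib

section
/- Let R(z) = ∑_{i=1}^{d} a_i/(z − p_i) be a d-good rational function with lemniscate K := {z ∈ Ĉ : |R(z)| ≥ 1}. Then the logarithmic capacity satisfies cap(K) ≥ [∏_{i≠j} |p_i − p_j| · ∏_{i=1}^{d} |a_i|]^{1/d²}, where the first product is over all ordered pairs (i,j) with i ≠ j, 1 ≤ i, j ≤ d. -/
open MeasureTheory Metric Complex Set Topology Filter OnePoint
open scoped Classical

noncomputable section

/-- The Riemann sphere, modeled as the one-point compactification of `ℂ`. -/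
abbrev RS : Type := OnePoint ℂ

instance : MeasurableSpace RS := borel RS
instance : BorelSpace RS := ⟨rfl⟩

/-- The finite part of a point of the Riemann sphere (junk value `0` at `∞`). -/
def sphToC (z : RS) : ℂ := if h : ∃ x : ℂ, (x : RS) = z then h.choose else 0

/-- The inversion `z ↦ 1/z` on the Riemann sphere. -/
def sphInv (z : RS) : RS :=
  if z = (∞ : RS) then ((0 : ℂ) : RS)
  else if sphToC z = 0 then (∞ : RS) else (((sphToC z)⁻¹ : ℂ) : RS)

/-- Mean-value-property definition of harmonicity on a planar set. -/
def HarmonicOnC (h : ℂ → ℝ) (D : Set ℂ) : Prop :=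
  ContinuousOn h D ∧ ∀ z ∈ D, ∀ r : ℝ, 0 < r → closedBall z r ⊆ D →
    h z = (2 * Real.pi)⁻¹ *
      ∫ θ in (0:ℝ)..(2 * Real.pi), h (z + (r : ℂ) * Complex.exp ((θ : ℂ) * Complex.I))

/-- Harmonicity on a subset of the Riemann sphere, via the two standard charts. -/
def HarmonicOnS (h : RS → ℝ) (D : Set RS) : Prop :=
  HarmonicOnC (fun x : ℂ => h (x : RS)) {x : ℂ | (x : RS) ∈ D} ∧
  HarmonicOnC (fun x : ℂ => h (sphInv (x : RS))) {x : ℂ | sphInv (x : RS) ∈ D}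

/-- `ω` is the harmonic measure of `D ⊆ Ĉ` at `a` (for disconnected `D`, the harmonic
measure of the component of `D` containing `a`). -/
def IsHarmonicMeasureS (D : Set RS) (a : RS) (ω : Measure RS) : Prop :=
  a ∈ D ∧ IsProbabilityMeasure ω ∧ ω ((frontier D)ᶜ) = 0 ∧
  ∀ h : RS → ℝ, HarmonicOnS h D → ContinuousOn h (closure D) →
    ∫ x, h x ∂ω = h a

/-- `ω` is the harmonic measure of the planar domain `D` at `a`. -/
def IsHarmonicMeasureC (D : Set ℂ) (a : ℂ) (ω : Measure ℂ) : Prop :=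
  a ∈ D ∧ IsProbabilityMeasure ω ∧ ω ((frontier D)ᶜ) = 0 ∧
  ∀ h : ℂ → ℝ, HarmonicOnC h D → ContinuousOn h (closure D) →
    ∫ x, h x ∂ω = h a

/-- The logarithmic kernel `log (1/|z-w|)`. -/
def logKer (z w : ℂ) : ℝ := Real.log (1 / dist z w)

/-- Mutual logarithmic energy `∬ log (1/|z-w|) dμ(z) dν(w)` as an extended real number. -/
def mutualEnergy (μ ν : Measure ℂ) : EReal :=
  ENNReal.toEReal (∫⁻ q : ℂ × ℂ, ENNReal.ofReal (logKer q.1 q.2) ∂(μ.prod ν)) -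
  ENNReal.toEReal (∫⁻ q : ℂ × ℂ, ENNReal.ofReal (-(logKer q.1 q.2)) ∂(μ.prod ν))

/-- Logarithmic energy of a measure. -/
def energyI (μ : Measure ℂ) : EReal := mutualEnergy μ μ

/-- Equilibrium energy of a set: infimum of the energies of Borel probability
measures supported on it. -/
def eqEnergy (K : Set ℂ) : EReal :=
  ⨅ (μ : Measure ℂ) (_ : IsProbabilityMeasure μ) (_ : μ Kᶜ = 0), energyI μ

/-- Logarithmic capacity `cap K = e^{-I(K)}`. -/
def logCap (K : Set ℂ) : ℝ :=
  if eqEnergy K = ⊤ then 0 else Real.exp (-(eqEnergy K).toReal)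

/-- The rational function `z ↦ ∑ i, a i / (z - p i)`. -/
def ratSum {d : ℕ} (a p : Fin d → ℂ) (z : ℂ) : ℂ := ∑ i, a i / (z - p i)

/-- Riemann-sphere-valued evaluation of `ratSum` (value `∞` at the poles). -/
def ratSumS {d : ℕ} (a p : Fin d → ℂ) (z : ℂ) : RS :=
  if z ∈ Set.range p then (∞ : RS) else ((ratSum a p z : ℂ) : RS)

/-- The lemniscate `{z ∈ ℂ : |R(z)| ≥ t}` of `R = ∑ a i / (z - p i)`;
the poles belong to it. -/
def lemniscate {d : ℕ} (a p : Fin d → ℂ) (t : ℝ) : Set ℂ :=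
  {z : ℂ | z ∈ Set.range p ∨ t ≤ ‖ratSum a p z‖}

/-- `Ω = R⁻¹(𝔻) ⊆ Ĉ` for `R = ∑ a i / (z - p i)` (it contains `∞` since `R(∞)=0`). -/
def ratSumDomain {d : ℕ} (a p : Fin d → ℂ) : Set RS :=
  {(∞ : RS)} ∪ (fun x : ℂ => (x : RS)) ''
    {z : ℂ | z ∉ Set.range p ∧ ‖ratSum a p z‖ < 1}

/-- An analytic Jordan curve: the image of the unit circle under an injective
analytic map with non-vanishing derivative, defined near the circle. -/
def IsAnalyticJordanCurve (J : Set ℂ) : Prop :=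
  ∃ (U : Set ℂ) (f : ℂ → ℂ), IsOpen U ∧ sphere (0:ℂ) 1 ⊆ U ∧ AnalyticOnNhd ℂ f U ∧
    Set.InjOn f (sphere (0:ℂ) 1) ∧ (∀ z ∈ sphere (0:ℂ) 1, deriv f z ≠ 0) ∧
    f '' sphere (0:ℂ) 1 = J

/-- A (topological) Jordan curve. -/
def IsJordanCurve (J : Set ℂ) : Prop :=
  ∃ f : ℂ → ℂ, ContinuousOn f (sphere (0:ℂ) 1) ∧ Set.InjOn f (sphere (0:ℂ) 1) ∧
    f '' sphere (0:ℂ) 1 = J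

/-- A bounded Jordan domain. -/
def IsJordanDomain (D : Set ℂ) : Prop :=
  IsOpen D ∧ IsConnected D ∧ Bornology.IsBounded D ∧ IsJordanCurve (frontier D)

/-- `R = ∑ a i / (z - p i)` is a `d`-good rational function: it has degree `d`
(the residues are nonzero and the poles are distinct), `R(∞) = 0`, and
`Ω = R⁻¹(𝔻)` is connected and bounded by `d` disjoint analytic Jordan curves,
the `i`-th of which surrounds the pole `p i`. -/
structure IsGoodRat (d : ℕ) (a p : Fin d → ℂ) : Prop where
  residue_ne : ∀ i, a i ≠ 0
  poles_inj : Function.Injective p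
  conn : IsConnected (ratSumDomain a p)
  curves : ∃ γ : Fin d → Set ℂ, (∀ i, IsAnalyticJordanCurve (γ i)) ∧
    (Pairwise fun i j => Disjoint (γ i) (γ j)) ∧
    frontier (ratSumDomain a p) = (fun x : ℂ => (x : RS)) '' ⋃ i, γ i ∧
    ∀ i, p i ∉ γ i ∧ Bornology.IsBounded (connectedComponentIn ((γ i)ᶜ) (p i))

/-- Evaluation of the rational function `P/Q` on the Riemann sphere. -/
def ratEval (P Q : Polynomial ℂ) : RS → RS := fun z =>
  if z = (∞ : RS) then
    (if Q.natDegree < P.natDegree then (∞ : RS)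
     else ((P.coeff Q.natDegree / Q.leadingCoeff : ℂ) : RS))
  else
    (if Q.eval (sphToC z) = 0 then (∞ : RS)
     else ((P.eval (sphToC z) / Q.eval (sphToC z) : ℂ) : RS))

/-- `g` has a zero of exact order `m` at `x`. -/
def HasZeroOrderAt (g : ℂ → ℂ) (x : ℂ) (m : ℕ) : Prop :=
  ∃ c : ℂ, c ≠ 0 ∧ Filter.Tendsto (fun y : ℂ => g y / (y - x) ^ m) (𝓝[≠] x) (𝓝 c)

/-- `f : Ĉ → ℂ` has a zero of exact order `m` at `z ∈ Ĉ`. -/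
def ZeroOrderAtS (f : RS → ℂ) (z : RS) (m : ℕ) : Prop :=
  (z = (∞ : RS) → HasZeroOrderAt (fun x : ℂ => f (sphInv (x : RS))) 0 m) ∧
  ∀ x : ℂ, z = (x : RS) → HasZeroOrderAt (fun y : ℂ => f (y : RS)) x m

/-- Holomorphy on a subset of the Riemann sphere (in both charts). -/
def HolomorphicOnS (f : RS → ℂ) (D : Set RS) : Prop :=
  DifferentiableOn ℂ (fun x : ℂ => f (x : RS)) {x : ℂ | (x : RS) ∈ D} ∧
  DifferentiableOn ℂ (fun x : ℂ => f (sphInv (x : RS))) {x : ℂ | sphInv (x : RS) ∈ D}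

/-- `f` is a proper map from `D` into the open unit disc. -/
def IsProperToDisc (f : RS → ℂ) (D : Set RS) : Prop :=
  Set.MapsTo f D (ball (0:ℂ) 1) ∧
  ∀ L : Set ℂ, L ⊆ ball (0:ℂ) 1 → IsCompact L → IsCompact {z ∈ D | f z ∈ L}

/-- `G` is the Green function of `D ⊆ Ĉ` with pole at `∞` (extended by `0` off `D`):
it is positive and harmonic on `D ∖ {∞}`, `G(z) - log|z|` has a finite limit at `∞`,
and `G` tends to `0` at every boundary point. -/
def IsGreenPoleInf (D : Set RS) (G : RS → ℝ) : Prop :=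
  (∞ : RS) ∈ D ∧
  HarmonicOnS G (D \ {(∞ : RS)}) ∧
  (∀ z ∈ D, z ≠ (∞ : RS) → 0 < G z) ∧
  (∀ z ∉ D, G z = 0) ∧
  (∀ w ∈ frontier D, Filter.Tendsto G (𝓝[D] w) (𝓝 0)) ∧
  ∃ L : ℝ, Filter.Tendsto (fun x : ℂ => G (x : RS) - Real.log (‖x‖))
    (Bornology.cobounded ℂ) (𝓝 L)

end


namespace Complex

/-- compatibility: the complex absolute value as an `AbsoluteValue`. -/
noncomputable def abs : AbsoluteValue ℂ ℝ := IsAbsoluteValue.toAbsoluteValue (norm : ℂ → ℝ)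

theorem abs_apply (z : ℂ) : Complex.abs z = ‖z‖ := rfl

theorem norm_eq_abs (z : ℂ) : ‖z‖ = Complex.abs z := rfl

theorem abs_natCast (n : ℕ) : Complex.abs (n : ℂ) = n := by
  rw [abs_apply]; simp

theorem continuous_abs : Continuous Complex.abs := continuous_norm

end Complex

set_option maxHeartbeats 1000000

open Polynomial
open scoped ENNReal NNReal

noncomputable section
namespace CapLem


/-- swap a double multiset product -/
lemma mswap {M : Type*} [CommMonoid M] (Z T : Multiset ℂ) (f : ℂ → ℂ → M) :
    (Z.map fun z => (T.map fun t => f z t).prod).prod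
      = (T.map fun t => (Z.map fun z => f z t).prod).prod := by
  induction Z using Multiset.induction_on with
  | empty => simp
  | cons z Z ih =>
      simp only [Multiset.map_cons, Multiset.prod_cons, ih, ← Multiset.prod_map_mul]

lemma mprod_const_mul (Z : Multiset ℂ) (c : ℝ) (f : ℂ → ℝ) :
    (Z.map fun z => c * f z).prod = c ^ Multiset.card Z * (Z.map f).prod := by
  induction Z using Multiset.induction_on with
  | empty => simp
  | cons z Z ih => simp [ih, pow_succ]; ring

lemma msum_const_mul (Z : Multiset ℂ) (c : ℝ≥0∞) (f : ℂ → ℝ≥0∞) :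
    (Z.map fun z => c * f z).sum = c * (Z.map f).sum := by
  induction Z using Multiset.induction_on with
  | empty => simp
  | cons z Z ih => simp [ih, mul_add]

lemma msum_ne_top {α : Type*} (Z : Multiset α) (f : α → ℝ≥0∞) (h : ∀ z ∈ Z, f z ≠ ⊤) :
    (Z.map f).sum ≠ ⊤ := by
  induction Z using Multiset.induction_on with
  | empty => simp
  | cons z Z ih =>
      simp only [Multiset.map_cons, Multiset.sum_cons]
      exact ENNReal.add_ne_top.2 ⟨h z (Multiset.mem_cons_self _ _),
        ih fun w hw => h w (Multiset.mem_cons_of_mem hw)⟩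

lemma msum_toReal {α : Type*} (Z : Multiset α) (f : α → ℝ≥0∞) (h : ∀ z ∈ Z, f z ≠ ⊤) :
    ((Z.map f).sum).toReal = (Z.map fun z => (f z).toReal).sum := by
  induction Z using Multiset.induction_on with
  | empty => simp
  | cons z Z ih =>
      simp only [Multiset.map_cons, Multiset.sum_cons]
      rw [ENNReal.toReal_add (h z (Multiset.mem_cons_self _ _))
        (msum_ne_top _ _ fun w hw => h w (Multiset.mem_cons_of_mem hw)),
        ih fun w hw => h w (Multiset.mem_cons_of_mem hw)]

lemma msum_sub {α : Type*} (Z : Multiset α) (f g : α → ℝ) :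
    (Z.map f).sum - (Z.map g).sum = (Z.map fun z => f z - g z).sum := by
  induction Z using Multiset.induction_on with
  | empty => simp
  | cons z Z ih => simp [← ih]; ring

lemma mlog_prod (Z : Multiset ℝ) (h : ∀ x ∈ Z, x ≠ 0) :
    Real.log Z.prod = (Z.map Real.log).sum := by
  induction Z using Multiset.induction_on with
  | empty => simp
  | cons z Z ih =>
      simp only [Multiset.prod_cons, Multiset.map_cons, Multiset.sum_cons]
      rw [Real.log_mul (h z (Multiset.mem_cons_self _ _))
        (Multiset.prod_ne_zero fun h0 => by
          have := h 0 (Multiset.mem_cons_of_mem h0); simp at this),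
        ih fun w hw => h w (Multiset.mem_cons_of_mem hw)]

lemma mprod_pos (Z : Multiset ℝ) (h : ∀ x ∈ Z, 0 < x) : 0 < Z.prod := by
  induction Z using Multiset.induction_on with
  | empty => simp
  | cons z Z ih =>
      simp only [Multiset.prod_cons]
      exact mul_pos (h z (Multiset.mem_cons_self _ _))
        (ih fun w hw => h w (Multiset.mem_cons_of_mem hw))

lemma mprod_le_mprod (Z : Multiset ℂ) (f g : ℂ → ℝ) (h0 : ∀ x ∈ Z, 0 ≤ f x)
    (h : ∀ x ∈ Z, f x ≤ g x) : (Z.map f).prod ≤ (Z.map g).prod := by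
  induction Z using Multiset.induction_on with
  | empty => simp
  | cons z Z ih =>
      simp only [Multiset.map_cons, Multiset.prod_cons]
      have h1 := h0 z (Multiset.mem_cons_self _ _)
      have h2 := h z (Multiset.mem_cons_self _ _)
      have h3 : (0:ℝ) ≤ (Z.map f).prod := by
        apply Multiset.prod_nonneg; intro x hx
        obtain ⟨w, hw, rfl⟩ := Multiset.mem_map.1 hx
        exact h0 w (Multiset.mem_cons_of_mem hw)
      exact mul_le_mul h2 (ih (fun w hw => h0 w (Multiset.mem_cons_of_mem hw))
        (fun w hw => h w (Multiset.mem_cons_of_mem hw))) h3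
        (le_trans h1 h2)




lemma exists_unimodular_far (k : ℕ) :
    ∃ r : ℝ, 0 < r ∧ ∀ c : Multiset ℂ, Multiset.card c ≤ k + 1 →
      ∃ lam : ℂ, Complex.abs lam = 1 ∧ ∀ x ∈ c, r ≤ dist lam x := by
  set N := k + 2 with hN
  set ζ : ℕ → ℂ := fun m => Complex.exp (((2 * Real.pi * m / N : ℝ) : ℂ) * Complex.I) with hζ
  have habs : ∀ m, Complex.abs (ζ m) = 1 := fun m => Complex.norm_exp_ofReal_mul_I _
  have hNpos : (0:ℝ) < N := by positivity
  have hpi := Real.pi_pos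
  have hinj : Set.InjOn ζ (Finset.range N) := by
    intro m hm m' hm' he
    simp only [Finset.coe_range, Set.mem_Iio] at hm hm'
    rw [hζ] at he
    rw [Complex.exp_eq_exp_iff_exists_int] at he
    obtain ⟨j, hj⟩ := he
    have h2 : (((2 * Real.pi * m / N : ℝ) : ℂ) - ((2 * Real.pi * m' / N : ℝ) : ℂ)) * Complex.I
        = ((j : ℂ) * (2 * Real.pi)) * Complex.I := by linear_combination hj
    have h3 := mul_right_cancel₀ Complex.I_ne_zero h2
    have h4 : (2 * Real.pi * m / N : ℝ) - (2 * Real.pi * m' / N : ℝ) = (j : ℝ) * (2 * Real.pi) := by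
      exact_mod_cast h3
    have hN0 : (N:ℝ) ≠ 0 := ne_of_gt hNpos
    have h5' : 2 * Real.pi * (m:ℝ) - 2 * Real.pi * (m':ℝ) = ((j:ℝ) * (2 * Real.pi)) * N := by
      field_simp at h4
      linear_combination (2 * Real.pi) * h4
    have h5 : (m : ℝ) - m' = (j:ℝ) * N := by
      have h2π : (2 * Real.pi) ≠ 0 := by positivity
      apply mul_left_cancel₀ h2π
      linear_combination h5'
    have c1 : (m:ℝ) < N := by exact_mod_cast hm
    have c2 : (m':ℝ) < N := by exact_mod_cast hm'
    have c3 : (0:ℝ) ≤ m := Nat.cast_nonneg m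
    have c4 : (0:ℝ) ≤ m' := Nat.cast_nonneg m'
    have hm1 : |(m : ℝ) - m'| < N := by
      rw [abs_sub_lt_iff]; constructor <;> linarith
    have hj0 : j = 0 := by
      by_contra hj0
      have h1j : (1:ℝ) ≤ |(j:ℝ)| := by exact_mod_cast Int.one_le_abs hj0
      rw [h5, abs_mul, abs_of_pos hNpos] at hm1
      nlinarith
    rw [hj0] at h5
    simp only [Int.cast_zero, zero_mul] at h5
    have : (m:ℝ) = m' := by linarith
    exact_mod_cast this
  set cand : Finset ℂ := (Finset.range N).image ζ with hcand
  have hcard : cand.card = N := by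
    rw [hcand, Finset.card_image_of_injOn hinj, Finset.card_range]
  have hne : (cand.offDiag).Nonempty := by
    obtain ⟨x, hx, y, hy, hxy⟩ := Finset.one_lt_card.1 (by omega : 1 < cand.card)
    exact ⟨(x, y), Finset.mem_offDiag.2 ⟨hx, hy, hxy⟩⟩
  set δ : ℝ := (cand.offDiag).inf' hne (fun q => dist q.1 q.2) with hδ
  have hδpos : 0 < δ := by
    rw [hδ]
    apply (Finset.lt_inf'_iff _).2
    intro q hq
    rw [Finset.mem_offDiag] at hq
    exact dist_pos.2 hq.2.2
  refine ⟨δ / 2, by positivity, ?_⟩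
  intro c hc
  by_contra hcon
  push_neg at hcon
  have hchoice : ∀ lam : ℂ, ∃ x : ℂ, lam ∈ cand → (x ∈ c.toFinset ∧ dist lam x < δ / 2) := by
    intro lam
    by_cases hlam : lam ∈ cand
    · obtain ⟨x, hx, hdx⟩ := hcon lam (by
        obtain ⟨m, hm, rfl⟩ := Finset.mem_image.1 hlam
        exact habs m)
      exact ⟨x, fun _ => ⟨Multiset.mem_toFinset.2 hx, by linarith⟩⟩
    · exact ⟨0, fun h => absurd h hlam⟩
  choose f hf using hchoice
  have hcardlt : c.toFinset.card < cand.card := by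
    calc c.toFinset.card ≤ Multiset.card c := Multiset.toFinset_card_le c
    _ ≤ k + 1 := hc
    _ < N := by omega
    _ = cand.card := hcard.symm
  obtain ⟨x, hx, y, hy, hxy, hfxy⟩ :=
    Finset.exists_ne_map_eq_of_card_lt_of_maps_to hcardlt (fun a ha => (hf a ha).1)
  have hlt : dist x y < δ := by
    calc dist x y ≤ dist x (f x) + dist (f x) y := dist_triangle _ _ _
    _ = dist x (f x) + dist y (f y) := by rw [hfxy, dist_comm (f y) y]
    _ < δ / 2 + δ / 2 := add_lt_add (hf x hx).2 (hf y hy).2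
    _ = δ := by ring
  have hge : δ ≤ dist x y := by
    rw [hδ]
    exact Finset.inf'_le (fun q => dist q.1 q.2) (show (x,y) ∈ cand.offDiag from Finset.mem_offDiag.2 ⟨hx, hy, hxy⟩)
  linarith




variable {d : ℕ} (a p : Fin d → ℂ)

def Qp : ℂ[X] := ∏ i, (X - C (p i))

def Pp : ℂ[X] := ∑ i, C (a i) * ∏ j ∈ Finset.univ.erase i, (X - C (p j))

lemma Qp_monic : (Qp p).Monic :=
  monic_prod_of_monic _ _ fun i _ => monic_X_sub_C (p i)

lemma Qp_natDegree : (Qp p).natDegree = d := by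
  rw [Qp, natDegree_prod _ _ fun i _ => X_sub_C_ne_zero (p i)]
  simp [natDegree_X_sub_C]

lemma Qp_eval (z : ℂ) : (Qp p).eval z = ∏ i, (z - p i) := by
  simp [Qp, eval_prod]

lemma Qp_eval_eq_zero_iff (z : ℂ) : (Qp p).eval z = 0 ↔ z ∈ Set.range p := by
  rw [Qp_eval, Finset.prod_eq_zero_iff]
  constructor
  · rintro ⟨i, _, h⟩; exact ⟨i, (sub_eq_zero.1 h).symm⟩
  · rintro ⟨i, rfl⟩; exact ⟨i, Finset.mem_univ i, by simp⟩

lemma Qp_eq_multiset : Qp p = ((Finset.univ.val.map p).map fun c => X - C c).prod := by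
  rw [Qp, Finset.prod_eq_multiset_prod, Multiset.map_map]
  rfl

lemma Qp_roots : (Qp p).roots = Finset.univ.val.map p := by
  rw [Qp_eq_multiset, roots_multiset_prod_X_sub_C]

lemma Pp_eval_pole (i : Fin d) :
    (Pp a p).eval (p i) = a i * ∏ j ∈ Finset.univ.erase i, (p i - p j) := by
  rw [Pp, eval_finset_sum]
  rw [Finset.sum_eq_single i]
  · simp [eval_prod]
  · intro k _ hki
    have hik : i ∈ Finset.univ.erase k := Finset.mem_erase.2 ⟨fun h => hki h.symm, Finset.mem_univ i⟩
    simp only [eval_mul, eval_C, eval_prod]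
    rw [Finset.prod_eq_zero hik (by simp)]
    ring
  · simp

lemma Pp_eval_pole_ne_zero (ha : ∀ i, a i ≠ 0) (hp : Function.Injective p) (i : Fin d) :
    (Pp a p).eval (p i) ≠ 0 := by
  rw [Pp_eval_pole]
  refine mul_ne_zero (ha i) (Finset.prod_ne_zero_iff.2 fun j hj => ?_)
  rw [Finset.mem_erase] at hj
  exact sub_ne_zero.2 fun h => hj.1 (hp h).symm

lemma Pp_ne_zero (hd : 0 < d) (ha : ∀ i, a i ≠ 0) (hp : Function.Injective p) :
    Pp a p ≠ 0 := by
  intro h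
  exact Pp_eval_pole_ne_zero a p ha hp ⟨0, hd⟩ (by rw [h]; simp)

lemma Pp_natDegree_lt (hd : 0 < d) : (Pp a p).natDegree < d := by
  apply lt_of_le_of_lt (natDegree_sum_le _ _)
  rw [Finset.fold_max_lt]
  refine ⟨hd, fun i _ => ?_⟩
  calc (C (a i) * ∏ j ∈ Finset.univ.erase i, (X - C (p j))).natDegree
      ≤ (∏ j ∈ Finset.univ.erase i, (X - C (p j))).natDegree := natDegree_C_mul_le _ _
    _ = ∑ j ∈ Finset.univ.erase i, 1 := by
        rw [natDegree_prod _ _ fun j _ => X_sub_C_ne_zero (p j)]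
        simp [natDegree_X_sub_C]
    _ < d := by
        rw [Finset.sum_const, smul_eq_mul, mul_one, Finset.card_erase_of_mem (Finset.mem_univ i),
          Finset.card_univ, Fintype.card_fin]
        omega

lemma ratSum_eq (z : ℂ) (hz : z ∉ Set.range p) :
    ratSum a p z = (Pp a p).eval z / (Qp p).eval z := by
  have hQ : (Qp p).eval z ≠ 0 := fun h => hz ((Qp_eval_eq_zero_iff p z).1 h)
  rw [eq_div_iff hQ, ratSum, Qp_eval, Pp, eval_finset_sum, Finset.sum_mul]
  apply Finset.sum_congr rfl
  intro i _
  have hzi : z - p i ≠ 0 := sub_ne_zero.2 fun h => hz ⟨i, h.symm⟩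
  simp only [eval_mul, eval_C, eval_prod, eval_sub, eval_X]
  rw [div_mul_eq_mul_div, ← Finset.prod_erase_mul Finset.univ _ (Finset.mem_univ i),
    div_eq_iff hzi]
  ring

lemma derivQ_ne_zero (hp : Function.Injective p) (i : Fin d) :
    (derivative (Qp p)).eval (p i) ≠ 0 := by
  rw [Qp_eq_multiset]
  have hmem : p i ∈ Finset.univ.val.map p :=
    Multiset.mem_map.2 ⟨i, Finset.mem_univ_val i, rfl⟩
  rw [eval_multiset_prod_X_sub_C_derivative hmem]
  have hnd : (Finset.univ.val.map p).Nodup :=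
    Multiset.Nodup.map hp Finset.univ.nodup
  apply Multiset.prod_ne_zero
  intro h0
  obtain ⟨w, hw, hw0⟩ := Multiset.mem_map.1 h0
  have hwZ : w ∈ Finset.univ.val.map p := Multiset.mem_of_mem_erase hw
  have : w ≠ p i := by
    intro he
    rw [he] at hw
    exact (Multiset.Nodup.notMem_erase hnd) hw
  exact this (by linear_combination -hw0)

def Wp : ℂ[X] := Pp a p * derivative (Qp p) - Qp p * derivative (Pp a p)

lemma Wp_eval_pole_ne_zero (ha : ∀ i, a i ≠ 0) (hp : Function.Injective p) (i : Fin d) :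
    (Wp a p).eval (p i) ≠ 0 := by
  rw [Wp]
  simp only [eval_sub, eval_mul]
  rw [(Qp_eval_eq_zero_iff p (p i)).2 ⟨i, rfl⟩]
  simpa using mul_ne_zero (Pp_eval_pole_ne_zero a p ha hp i) (derivQ_ne_zero p hp i)

lemma Wp_ne_zero (hd : 0 < d) (ha : ∀ i, a i ≠ 0) (hp : Function.Injective p) :
    Wp a p ≠ 0 := by
  intro h
  exact Wp_eval_pole_ne_zero a p ha hp ⟨0, hd⟩ (by rw [h]; simp)

lemma Qp_eval_roots_P_ne_zero (ha : ∀ i, a i ≠ 0) (hp : Function.Injective p)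
    (β : ℂ) (hβ : β ∈ (Pp a p).roots) : (Qp p).eval β ≠ 0 := by
  intro h
  obtain ⟨i, rfl⟩ := (Qp_eval_eq_zero_iff p β).1 h
  exact Pp_eval_pole_ne_zero a p ha hp i ((mem_roots'.1 hβ).2)

lemma Qp_eval_roots_W_ne_zero (ha : ∀ i, a i ≠ 0) (hp : Function.Injective p)
    (τ : ℂ) (hτ : τ ∈ (Wp a p).roots) : (Qp p).eval τ ≠ 0 := by
  intro h
  obtain ⟨i, rfl⟩ := (Qp_eval_eq_zero_iff p τ).1 h
  exact Wp_eval_pole_ne_zero a p ha hp i ((mem_roots'.1 hτ).2)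


section Fixed
variable {d : ℕ}

def Hn (a p : Fin d → ℂ) (n : ℕ) (lam : ℂ) : ℂ[X] := C lam * (Qp p) ^ n - (Pp a p) ^ n

lemma lam_ne_zero {lam : ℂ} (hlam : Complex.abs lam = 1) : lam ≠ 0 := by
  intro h; rw [h] at hlam; simp at hlam

lemma Qpow_natDegree (p : Fin d → ℂ) (n : ℕ) : ((Qp p) ^ n).natDegree = n * d := by
  rw [Monic.natDegree_pow (Qp_monic p), Qp_natDegree]

lemma Ppow_natDegree_lt (a p : Fin d → ℂ) (hd : 0 < d) (n : ℕ) (hn : 1 ≤ n) :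
    ((Pp a p) ^ n).natDegree < n * d := by
  calc ((Pp a p) ^ n).natDegree ≤ n * (Pp a p).natDegree := natDegree_pow_le
    _ < n * d := by
        have := Pp_natDegree_lt a p hd
        exact mul_lt_mul_of_pos_left this (by omega : 0 < n)

lemma Hn_coeff_top (a p : Fin d → ℂ) (hd : 0 < d) (n : ℕ) (hn : 1 ≤ n) (lam : ℂ) :
    (Hn a p n lam).coeff (n * d) = lam := by
  rw [Hn, coeff_sub, coeff_C_mul,
    coeff_eq_zero_of_natDegree_lt (Ppow_natDegree_lt a p hd n hn)]
  have h1 : ((Qp p) ^ n).coeff (n*d) = 1 := by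
    have := Monic.pow (Qp_monic p) (n := n)
    rw [← Qpow_natDegree p n]
    exact this.coeff_natDegree
  rw [h1]; ring

lemma Hn_ne_zero (a p : Fin d → ℂ) (hd : 0 < d) (n : ℕ) (hn : 1 ≤ n) {lam : ℂ}
    (hlam : Complex.abs lam = 1) : Hn a p n lam ≠ 0 := fun h => by
  have := Hn_coeff_top a p hd n hn lam
  rw [h] at this; simp at this
  exact lam_ne_zero hlam this.symm

lemma Hn_natDegree (a p : Fin d → ℂ) (hd : 0 < d) (n : ℕ) (hn : 1 ≤ n) {lam : ℂ}
    (hlam : Complex.abs lam = 1) : (Hn a p n lam).natDegree = n * d := by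
  apply le_antisymm
  · apply le_trans (natDegree_sub_le _ _)
    rw [max_le_iff]
    constructor
    · apply le_trans (natDegree_C_mul_le _ _) (le_of_eq (Qpow_natDegree p n))
    · exact le_of_lt (Ppow_natDegree_lt a p hd n hn)
  · apply le_natDegree_of_ne_zero
    rw [Hn_coeff_top a p hd n hn lam]
    exact lam_ne_zero hlam

lemma Hn_leadingCoeff (a p : Fin d → ℂ) (hd : 0 < d) (n : ℕ) (hn : 1 ≤ n) {lam : ℂ}
    (hlam : Complex.abs lam = 1) : (Hn a p n lam).leadingCoeff = lam := by
  rw [leadingCoeff, Hn_natDegree a p hd n hn hlam, Hn_coeff_top a p hd n hn lam]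

def Zn (a p : Fin d → ℂ) (n : ℕ) (lam : ℂ) : Multiset ℂ := (Hn a p n lam).roots

lemma Zn_card (a p : Fin d → ℂ) (hd : 0 < d) (n : ℕ) (hn : 1 ≤ n) {lam : ℂ}
    (hlam : Complex.abs lam = 1) : Multiset.card (Zn a p n lam) = n * d := by
  rw [Zn, (splits_iff_card_roots).1 (IsAlgClosed.splits _),
    Hn_natDegree a p hd n hn hlam]

lemma Hn_eq_prod (a p : Fin d → ℂ) (hd : 0 < d) (n : ℕ) (hn : 1 ≤ n) {lam : ℂ}
    (hlam : Complex.abs lam = 1) : Hn a p n lam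
    = C lam * ((Zn a p n lam).map fun z => X - C z).prod := by
  have h := (IsAlgClosed.splits (Hn a p n lam)).eq_prod_roots
  rwa [Hn_leadingCoeff a p hd n hn hlam] at h

lemma Hn_eval (a p : Fin d → ℂ) (hd : 0 < d) (n : ℕ) (hn : 1 ≤ n) {lam : ℂ}
    (hlam : Complex.abs lam = 1) (w : ℂ) : (Hn a p n lam).eval w
    = lam * ((Zn a p n lam).map fun z => w - z).prod := by
  conv_lhs => rw [Hn_eq_prod a p hd n hn hlam]
  rw [eval_mul, eval_C, eval_multiset_prod, Multiset.map_map]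
  simp [Function.comp]

lemma Hn_eval_abs (a p : Fin d → ℂ) (hd : 0 < d) (n : ℕ) (hn : 1 ≤ n) {lam : ℂ}
    (hlam : Complex.abs lam = 1) (w : ℂ) : Complex.abs ((Hn a p n lam).eval w)
    = ((Zn a p n lam).map fun z => Complex.abs (w - z)).prod := by
  rw [Hn_eval a p hd n hn hlam, map_mul, hlam, one_mul, map_multiset_prod,
    Multiset.map_map]
  rfl

lemma root_key (a p : Fin d → ℂ) (n : ℕ) (lam : ℂ) {z : ℂ} (hz : z ∈ Zn a p n lam) :
    (Pp a p).eval z ^ n = lam * (Qp p).eval z ^ n := by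
  have h0 : (Hn a p n lam).eval z = 0 := (mem_roots'.1 hz).2
  rw [Hn, eval_sub, eval_mul, eval_C, eval_pow, eval_pow, sub_eq_zero] at h0
  exact h0.symm

lemma root_Q_ne_zero (a p : Fin d → ℂ) (ha : ∀ i, a i ≠ 0) (hp : Function.Injective p)
    (n : ℕ) (hn : 1 ≤ n) (lam : ℂ) {z : ℂ} (hz : z ∈ Zn a p n lam) :
    (Qp p).eval z ≠ 0 := by
  intro h
  have hk := root_key a p n lam hz
  rw [h, zero_pow (by omega : n ≠ 0), mul_zero, pow_eq_zero_iff (by omega : n ≠ 0)] at hk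
  obtain ⟨i, rfl⟩ := (Qp_eval_eq_zero_iff p z).1 h
  exact Pp_eval_pole_ne_zero a p ha hp i hk

lemma root_P_ne_zero (a p : Fin d → ℂ) (ha : ∀ i, a i ≠ 0) (hp : Function.Injective p)
    (n : ℕ) (hn : 1 ≤ n) {lam : ℂ} (hlam : Complex.abs lam = 1) {z : ℂ}
    (hz : z ∈ Zn a p n lam) : (Pp a p).eval z ≠ 0 := by
  intro h
  have hk := root_key a p n lam hz
  rw [h, zero_pow (by omega : n ≠ 0)] at hk
  have hQ : (Qp p).eval z ^ n = 0 := by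
    rcases mul_eq_zero.1 hk.symm with h1 | h1
    · exact absurd h1 (lam_ne_zero hlam)
    · exact h1
  exact root_Q_ne_zero a p ha hp n hn lam hz (pow_eq_zero_iff (by omega : n ≠ 0) |>.1 hQ)

lemma root_mem_lemniscate (a p : Fin d → ℂ) (ha : ∀ i, a i ≠ 0) (hp : Function.Injective p)
    (n : ℕ) (hn : 1 ≤ n) {lam : ℂ} (hlam : Complex.abs lam = 1) {z : ℂ}
    (hz : z ∈ Zn a p n lam) : z ∈ lemniscate a p 1 := by
  by_cases hrange : z ∈ Set.range p
  · exact Or.inl hrange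
  right
  have hQ : (Qp p).eval z ≠ 0 := root_Q_ne_zero a p ha hp n hn lam hz
  have hk := root_key a p n lam hz
  have habs : Complex.abs ((Pp a p).eval z) ^ n = Complex.abs ((Qp p).eval z) ^ n := by
    have := congrArg Complex.abs hk
    rwa [map_mul, map_pow, map_pow, hlam, one_mul] at this
  have hge : Complex.abs ((Qp p).eval z) ≤ Complex.abs ((Pp a p).eval z) := by
    by_contra hlt
    push_neg at hlt
    have := pow_lt_pow_left₀ hlt (AbsoluteValue.nonneg _ _) (by omega : n ≠ 0)
    rw [habs] at this
    exact lt_irrefl _ this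
  rw [ratSum_eq a p z hrange, Complex.norm_eq_abs, map_div₀]
  rw [le_div_iff₀ (AbsoluteValue.pos _ hQ), one_mul]
  exact hge


lemma starAbs (a p : Fin d → ℂ) (hd : 0 < d) (n : ℕ) (hn : 1 ≤ n) {lam : ℂ}
    (hlam : Complex.abs lam = 1) (A : ℂ[X]) (hA : A ≠ 0) :
    ((Zn a p n lam).map fun z => Complex.abs (A.eval z)).prod
      = Complex.abs A.leadingCoeff ^ (n * d)
        * ((A.roots).map fun α => Complex.abs ((Hn a p n lam).eval α)).prod := by
  have hA2 : ∀ z : ℂ, Complex.abs (A.eval z)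
      = Complex.abs A.leadingCoeff * ((A.roots).map fun α => Complex.abs (z - α)).prod := by
    intro z
    conv_lhs => rw [(IsAlgClosed.splits A).eq_prod_roots]
    rw [eval_mul, eval_C, map_mul, eval_multiset_prod, map_multiset_prod,
      Multiset.map_map, Multiset.map_map]
    simp [Function.comp]
  calc ((Zn a p n lam).map fun z => Complex.abs (A.eval z)).prod
      = ((Zn a p n lam).map fun z => Complex.abs A.leadingCoeff
          * ((A.roots).map fun α => Complex.abs (z - α)).prod).prod := by
        exact congrArg Multiset.prod (Multiset.map_congr rfl fun z _ => hA2 z)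
    _ = Complex.abs A.leadingCoeff ^ (Multiset.card (Zn a p n lam))
          * ((Zn a p n lam).map fun z =>
              ((A.roots).map fun α => Complex.abs (z - α)).prod).prod :=
        mprod_const_mul _ _ _
    _ = Complex.abs A.leadingCoeff ^ (n * d)
        * ((A.roots).map fun α => Complex.abs ((Hn a p n lam).eval α)).prod := by
        rw [Zn_card a p hd n hn hlam, mswap]
        congr 1
        apply congrArg Multiset.prod (Multiset.map_congr rfl fun α _ => ?_)
        rw [Hn_eval_abs a p hd n hn hlam α]
        apply congrArg Multiset.prod (Multiset.map_congr rfl fun z _ => ?_)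
        exact (AbsoluteValue.map_sub _ _ _)

def Rabs (a p : Fin d → ℂ) : ℝ := ∏ i, Complex.abs ((Pp a p).eval (p i))
def Babs (a p : Fin d → ℂ) : ℝ := (((Pp a p).roots).map fun β => Complex.abs ((Qp p).eval β)).prod
def BWabs (a p : Fin d → ℂ) : ℝ := (((Wp a p).roots).map fun τ => Complex.abs ((Qp p).eval τ)).prod

lemma prodQ_eq (a p : Fin d → ℂ) (hd : 0 < d) (n : ℕ) (hn : 1 ≤ n) {lam : ℂ}
    (hlam : Complex.abs lam = 1) :
    ((Zn a p n lam).map fun z => Complex.abs ((Qp p).eval z)).prod = Rabs a p ^ n := by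
  rw [starAbs a p hd n hn hlam (Qp p) (Qp_monic p).ne_zero, (Qp_monic p).leadingCoeff]
  simp only [map_one, one_pow, one_mul]
  rw [Qp_roots, Multiset.map_map]
  have hptw : ∀ i : Fin d,
      Complex.abs ((Hn a p n lam).eval (p i)) = Complex.abs ((Pp a p).eval (p i)) ^ n := by
    intro i
    have hQ0 : (Qp p).eval (p i) = 0 := (Qp_eval_eq_zero_iff p (p i)).2 ⟨i, rfl⟩
    rw [Hn, eval_sub, eval_mul, eval_C, eval_pow, eval_pow, hQ0,
      zero_pow (by omega : n ≠ 0), mul_zero, zero_sub, AbsoluteValue.map_neg, map_pow]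
  calc (Finset.univ.val.map fun i => Complex.abs ((Hn a p n lam).eval (p i))).prod
      = (Finset.univ.val.map fun i => Complex.abs ((Pp a p).eval (p i)) ^ n).prod := by
        exact congrArg Multiset.prod (Multiset.map_congr rfl fun i _ => hptw i)
    _ = ((Finset.univ.val.map fun i => Complex.abs ((Pp a p).eval (p i))).prod) ^ n :=
        Multiset.prod_map_pow
    _ = Rabs a p ^ n := by rw [Rabs, Finset.prod_eq_multiset_prod]

lemma prodP_eq (a p : Fin d → ℂ) (hd : 0 < d) (ha : ∀ i, a i ≠ 0) (hp : Function.Injective p)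
    (n : ℕ) (hn : 1 ≤ n) {lam : ℂ} (hlam : Complex.abs lam = 1) :
    ((Zn a p n lam).map fun z => Complex.abs ((Pp a p).eval z)).prod
      = Complex.abs (Pp a p).leadingCoeff ^ (n * d) * Babs a p ^ n := by
  rw [starAbs a p hd n hn hlam (Pp a p) (Pp_ne_zero a p hd ha hp)]
  congr 1
  have hptw : ∀ β ∈ (Pp a p).roots,
      Complex.abs ((Hn a p n lam).eval β) = Complex.abs ((Qp p).eval β) ^ n := by
    intro β hβ
    have hP0 : (Pp a p).eval β = 0 := (mem_roots'.1 hβ).2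
    rw [Hn, eval_sub, eval_mul, eval_C, eval_pow, eval_pow, hP0,
      zero_pow (by omega : n ≠ 0), sub_zero, map_mul, hlam, one_mul, map_pow]
  calc (((Pp a p).roots).map fun β => Complex.abs ((Hn a p n lam).eval β)).prod
      = (((Pp a p).roots).map fun β => Complex.abs ((Qp p).eval β) ^ n).prod :=
        congrArg Multiset.prod (Multiset.map_congr rfl hptw)
    _ = Babs a p ^ n := Multiset.prod_map_pow

lemma prodW_ge (a p : Fin d → ℂ) (hd : 0 < d) (ha : ∀ i, a i ≠ 0) (hp : Function.Injective p)
    (n : ℕ) (hn : 1 ≤ n) {lam : ℂ} (hlam : Complex.abs lam = 1) (r : ℝ) (hr : 0 < r)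
    (hfar : ∀ τ ∈ (Wp a p).roots,
      r ≤ dist lam ((Pp a p).eval τ ^ n / (Qp p).eval τ ^ n)) :
    Complex.abs (Wp a p).leadingCoeff ^ (n * d)
        * (BWabs a p ^ n * r ^ Multiset.card ((Wp a p).roots))
      ≤ ((Zn a p n lam).map fun z => Complex.abs ((Wp a p).eval z)).prod := by
  rw [starAbs a p hd n hn hlam (Wp a p) (Wp_ne_zero a p hd ha hp)]
  apply mul_le_mul_of_nonneg_left _ (by positivity)
  have hptw : ∀ τ ∈ (Wp a p).roots,
      Complex.abs ((Qp p).eval τ) ^ n * r ≤ Complex.abs ((Hn a p n lam).eval τ) := by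
    intro τ hτ
    have hQτ : (Qp p).eval τ ≠ 0 := Qp_eval_roots_W_ne_zero a p ha hp τ hτ
    have hfac : (Hn a p n lam).eval τ
        = (Qp p).eval τ ^ n * (lam - (Pp a p).eval τ ^ n / (Qp p).eval τ ^ n) := by
      rw [Hn, eval_sub, eval_mul, eval_C, eval_pow, eval_pow]
      field_simp
    rw [hfac, map_mul, map_pow]
    apply mul_le_mul_of_nonneg_left _ (by positivity)
    calc r ≤ dist lam ((Pp a p).eval τ ^ n / (Qp p).eval τ ^ n) := hfar τ hτ
      _ = Complex.abs (lam - (Pp a p).eval τ ^ n / (Qp p).eval τ ^ n) := Complex.dist_eq _ _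
  calc BWabs a p ^ n * r ^ Multiset.card ((Wp a p).roots)
      = (((Wp a p).roots).map fun τ => Complex.abs ((Qp p).eval τ) ^ n * r).prod := by
        rw [Multiset.prod_map_mul (f := fun τ => Complex.abs ((Qp p).eval τ) ^ n)
          (g := fun _ => r)]
        rw [Multiset.prod_map_pow, Multiset.map_const', Multiset.prod_replicate]
        rfl
    _ ≤ (((Wp a p).roots).map fun τ => Complex.abs ((Hn a p n lam).eval τ)).prod :=
        mprod_le_mprod _ _ _ (fun τ _ => by positivity) hptw


lemma key_point (a p : Fin d → ℂ) (n : ℕ) (hn : 1 ≤ n) (lam : ℂ) {z : ℂ}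
    (hz : z ∈ Zn a p n lam) :
    (Pp a p).eval z * (derivative (Hn a p n lam)).eval z
      = n * lam * ((Qp p).eval z) ^ (n - 1) * (Wp a p).eval z := by
  have hk := root_key a p n lam hz
  have hdH : derivative (Hn a p n lam)
      = C lam * (C (n:ℂ) * (Qp p) ^ (n-1) * derivative (Qp p))
        - C (n:ℂ) * (Pp a p) ^ (n-1) * derivative (Pp a p) := by
    rw [Hn, derivative_sub, derivative_C_mul, derivative_pow, derivative_pow]
  rw [hdH]
  simp only [eval_sub, eval_mul, eval_C, eval_pow, Wp, eval_sub, eval_mul]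
  have hq1 : (Qp p).eval z ^ (n-1) * (Qp p).eval z = (Qp p).eval z ^ n := by
    rw [← pow_succ]; congr 1; omega
  have hP1 : (Pp a p).eval z ^ (n-1) * (Pp a p).eval z = (Pp a p).eval z ^ n := by
    rw [← pow_succ]; congr 1; omega
  linear_combination (-(n:ℂ) * (derivative (Pp a p)).eval z) * hP1
    + (-(n:ℂ) * (derivative (Pp a p)).eval z) * hk
    + ((n:ℂ) * lam * (derivative (Pp a p)).eval z) * hq1

lemma Hd_eval_root (a p : Fin d → ℂ) (hd : 0 < d) (n : ℕ) (hn : 1 ≤ n) {lam : ℂ}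
    (hlam : Complex.abs lam = 1) {z : ℂ} (hz : z ∈ Zn a p n lam) :
    (derivative (Hn a p n lam)).eval z
      = lam * (((Zn a p n lam).erase z).map fun w => z - w).prod := by
  conv_lhs => rw [Hn_eq_prod a p hd n hn hlam]
  rw [derivative_C_mul, eval_mul, eval_C, eval_multiset_prod_X_sub_C_derivative hz]

def realV (a p : Fin d → ℂ) (n : ℕ) (lam : ℂ) : ℝ :=
  ((Zn a p n lam).map fun z =>
    (((Zn a p n lam).erase z).map fun w => Complex.abs (z - w)).prod).prod

lemma prodHd_eq (a p : Fin d → ℂ) (hd : 0 < d) (n : ℕ) (hn : 1 ≤ n) {lam : ℂ}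
    (hlam : Complex.abs lam = 1) :
    ((Zn a p n lam).map fun z => Complex.abs ((derivative (Hn a p n lam)).eval z)).prod
      = realV a p n lam := by
  apply congrArg Multiset.prod (Multiset.map_congr rfl fun z hz => ?_)
  rw [Hd_eval_root a p hd n hn hlam hz, map_mul, hlam, one_mul, map_multiset_prod,
    Multiset.map_map]
  rfl

lemma A4 (a p : Fin d → ℂ) (hd : 0 < d) (n : ℕ) (hn : 1 ≤ n) {lam : ℂ}
    (hlam : Complex.abs lam = 1) :
    ((Zn a p n lam).map fun z => Complex.abs ((Pp a p).eval z)).prod * realV a p n lam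
      = (n : ℝ) ^ (n * d)
        * ((Zn a p n lam).map fun z => Complex.abs ((Qp p).eval z)).prod ^ (n - 1)
        * ((Zn a p n lam).map fun z => Complex.abs ((Wp a p).eval z)).prod := by
  rw [← prodHd_eq a p hd n hn hlam, ← Multiset.prod_map_mul]
  have hptw : ∀ z ∈ Zn a p n lam,
      Complex.abs ((Pp a p).eval z) * Complex.abs ((derivative (Hn a p n lam)).eval z)
        = (n : ℝ) * (Complex.abs ((Qp p).eval z) ^ (n - 1) * Complex.abs ((Wp a p).eval z)) := by
    intro z hz
    have := congrArg Complex.abs (key_point a p n hn lam hz)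
    rw [map_mul] at this
    rw [this, map_mul, map_mul, map_mul, map_pow, Complex.abs_natCast, hlam]
    ring
  rw [congrArg Multiset.prod (Multiset.map_congr rfl hptw), mprod_const_mul,
    Zn_card a p hd n hn hlam, Multiset.prod_map_mul, Multiset.prod_map_pow]
  ring

lemma realV_ge (a p : Fin d → ℂ) (hd : 0 < d) (ha : ∀ i, a i ≠ 0) (hp : Function.Injective p)
    (n : ℕ) (hn : 1 ≤ n) {lam : ℂ} (hlam : Complex.abs lam = 1) (r : ℝ) (hr : 0 < r)
    (hfar : ∀ τ ∈ (Wp a p).roots,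
      r ≤ dist lam ((Pp a p).eval τ ^ n / (Qp p).eval τ ^ n)) :
    Rabs a p ^ (n * (n - 1))
        * ((Complex.abs (Wp a p).leadingCoeff ^ d * BWabs a p)
            / (Complex.abs (Pp a p).leadingCoeff ^ d * Babs a p)) ^ n
        * r ^ Multiset.card ((Wp a p).roots)
      ≤ realV a p n lam := by
  have hLP : 0 < Complex.abs (Pp a p).leadingCoeff :=
    AbsoluteValue.pos _ (leadingCoeff_ne_zero.2 (Pp_ne_zero a p hd ha hp))
  have hLW : 0 < Complex.abs (Wp a p).leadingCoeff :=
    AbsoluteValue.pos _ (leadingCoeff_ne_zero.2 (Wp_ne_zero a p hd ha hp))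
  have hBabs : 0 < Babs a p := by
    rw [Babs]
    apply mprod_pos
    intro x hx
    obtain ⟨β, hβ, rfl⟩ := Multiset.mem_map.1 hx
    exact AbsoluteValue.pos _ (Qp_eval_roots_P_ne_zero a p ha hp β hβ)
  have hBW : 0 < BWabs a p := by
    rw [BWabs]
    apply mprod_pos
    intro x hx
    obtain ⟨τ, hτ, rfl⟩ := Multiset.mem_map.1 hx
    exact AbsoluteValue.pos _ (Qp_eval_roots_W_ne_zero a p ha hp τ hτ)
  have hRabs : 0 < Rabs a p := by
    rw [Rabs]
    apply Finset.prod_pos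
    intro i _
    exact AbsoluteValue.pos _ (Pp_eval_pole_ne_zero a p ha hp i)
  have hX1 : ((Zn a p n lam).map fun z => Complex.abs ((Pp a p).eval z)).prod
      = Complex.abs (Pp a p).leadingCoeff ^ (n * d) * Babs a p ^ n :=
    prodP_eq a p hd ha hp n hn hlam
  have hX1pos : 0 < ((Zn a p n lam).map fun z => Complex.abs ((Pp a p).eval z)).prod := by
    rw [hX1]; positivity
  apply le_of_mul_le_mul_left _ hX1pos
  rw [A4 a p hd n hn hlam, prodQ_eq a p hd n hn hlam]
  calc ((Zn a p n lam).map fun z => Complex.abs ((Pp a p).eval z)).prod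
        * (Rabs a p ^ (n * (n-1))
          * ((Complex.abs (Wp a p).leadingCoeff ^ d * BWabs a p)
            / (Complex.abs (Pp a p).leadingCoeff ^ d * Babs a p)) ^ n
          * r ^ Multiset.card ((Wp a p).roots))
      = Rabs a p ^ (n * (n-1))
          * (Complex.abs (Wp a p).leadingCoeff ^ (n*d)
            * (BWabs a p ^ n * r ^ Multiset.card ((Wp a p).roots))) := by
        have hne : (Complex.abs (Pp a p).leadingCoeff ^ d * Babs a p) ≠ 0 := by positivity
        rw [hX1, mul_comm n d, pow_mul, pow_mul, div_pow]
        rw [← mul_pow]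
        field_simp
        ring
    _ ≤ (n:ℝ) ^ (n*d) * (Rabs a p ^ n) ^ (n-1)
          * ((Zn a p n lam).map fun z => Complex.abs ((Wp a p).eval z)).prod := by
        have h1 : (1:ℝ) ≤ (n:ℝ) ^ (n*d) := one_le_pow₀ (by exact_mod_cast hn)
        have h2 := prodW_ge a p hd ha hp n hn hlam r hr hfar
        calc Rabs a p ^ (n*(n-1))
              * (Complex.abs (Wp a p).leadingCoeff ^ (n*d)
                * (BWabs a p ^ n * r ^ Multiset.card ((Wp a p).roots)))
            ≤ Rabs a p ^ (n*(n-1))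
              * ((Zn a p n lam).map fun z => Complex.abs ((Wp a p).eval z)).prod := by
              apply mul_le_mul_of_nonneg_left h2 (by positivity)
          _ ≤ (n:ℝ) ^ (n*d) * (Rabs a p ^ n) ^ (n-1)
              * ((Zn a p n lam).map fun z => Complex.abs ((Wp a p).eval z)).prod := by
              rw [← pow_mul]
              have hWprod : 0 ≤ ((Zn a p n lam).map fun z =>
                  Complex.abs ((Wp a p).eval z)).prod := by
                apply Multiset.prod_nonneg
                intro x hx
                obtain ⟨zz, hzz, rfl⟩ := Multiset.mem_map.1 hx
                exact AbsoluteValue.nonneg _ _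
              have h3 : 0 ≤ Rabs a p ^ (n*(n-1)) * ((Zn a p n lam).map fun z =>
                  Complex.abs ((Wp a p).eval z)).prod :=
                mul_nonneg (le_of_lt (pow_pos hRabs _)) hWprod
              calc Rabs a p ^ (n*(n-1)) * ((Zn a p n lam).map fun z =>
                    Complex.abs ((Wp a p).eval z)).prod
                  = 1 * (Rabs a p ^ (n*(n-1)) * ((Zn a p n lam).map fun z =>
                    Complex.abs ((Wp a p).eval z)).prod) := by ring
                _ ≤ (n:ℝ) ^ (n*d) * (Rabs a p ^ (n*(n-1)) * ((Zn a p n lam).map fun z =>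
                    Complex.abs ((Wp a p).eval z)).prod) := mul_le_mul_of_nonneg_right h1 h3
                _ = (n:ℝ) ^ (n*d) * Rabs a p ^ (n*(n-1)) * ((Zn a p n lam).map fun z =>
                    Complex.abs ((Wp a p).eval z)).prod := by ring

lemma realV_pos (a p : Fin d → ℂ) (hd : 0 < d) (ha : ∀ i, a i ≠ 0) (hp : Function.Injective p)
    (n : ℕ) (hn : 1 ≤ n) {lam : ℂ} (hlam : Complex.abs lam = 1) (r : ℝ) (hr : 0 < r)
    (hfar : ∀ τ ∈ (Wp a p).roots,
      r ≤ dist lam ((Pp a p).eval τ ^ n / (Qp p).eval τ ^ n)) :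
    0 < realV a p n lam := by
  apply lt_of_lt_of_le _ (realV_ge a p hd ha hp n hn hlam r hr hfar)
  have hLP : 0 < Complex.abs (Pp a p).leadingCoeff :=
    AbsoluteValue.pos _ (leadingCoeff_ne_zero.2 (Pp_ne_zero a p hd ha hp))
  have hLW : 0 < Complex.abs (Wp a p).leadingCoeff :=
    AbsoluteValue.pos _ (leadingCoeff_ne_zero.2 (Wp_ne_zero a p hd ha hp))
  have hBabs : 0 < Babs a p := by
    rw [Babs]; apply mprod_pos; intro x hx
    obtain ⟨β, hβ, rfl⟩ := Multiset.mem_map.1 hx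
    exact AbsoluteValue.pos _ (Qp_eval_roots_P_ne_zero a p ha hp β hβ)
  have hBW : 0 < BWabs a p := by
    rw [BWabs]; apply mprod_pos; intro x hx
    obtain ⟨τ, hτ, rfl⟩ := Multiset.mem_map.1 hx
    exact AbsoluteValue.pos _ (Qp_eval_roots_W_ne_zero a p ha hp τ hτ)
  have hRabs : 0 < Rabs a p := by
    rw [Rabs]; apply Finset.prod_pos; intro i _
    exact AbsoluteValue.pos _ (Pp_eval_pole_ne_zero a p ha hp i)
  positivity

lemma nodup_Zn (a p : Fin d → ℂ) (n : ℕ) (lam : ℂ) (hV : realV a p n lam ≠ 0) :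
    (Zn a p n lam).Nodup := by
  by_contra hnd
  apply hV
  rw [Multiset.nodup_iff_count_le_one] at hnd
  push_neg at hnd
  obtain ⟨x, hx2⟩ := hnd
  have hxZ : x ∈ Zn a p n lam := Multiset.count_pos.1 (by omega)
  have hxE : x ∈ (Zn a p n lam).erase x := by
    rw [← Multiset.count_pos, Multiset.count_erase_self]
    omega
  rw [realV]
  apply Multiset.prod_eq_zero
  apply Multiset.mem_map.2
  refine ⟨x, hxZ, ?_⟩
  apply Multiset.prod_eq_zero
  apply Multiset.mem_map.2
  exact ⟨x, hxE, by simp⟩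

end Fixed

lemma measurable_logKer : Measurable fun q : ℂ × ℂ => logKer q.1 q.2 := by
  unfold logKer
  simp_rw [one_div]
  exact Real.measurable_log.comp measurable_dist.inv

lemma msum_neg (Z : Multiset ℂ) (f : ℂ → ℝ) :
    (Z.map fun z => -(f z)).sum = -(Z.map f).sum := by
  induction Z using Multiset.induction_on with
  | empty => simp
  | cons z Z ih => simp [ih]; ring

lemma tor_sub (x : ℝ) :
    (ENNReal.ofReal x).toReal - (ENNReal.ofReal (-x)).toReal = x := by
  rcases le_total 0 x with h | h
  · rw [ENNReal.toReal_ofReal h, ENNReal.ofReal_eq_zero.2 (by linarith)]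
    simp
  · rw [ENNReal.ofReal_eq_zero.2 h, ENNReal.toReal_ofReal (by linarith)]
    simp

lemma ereal_sub_coe (x y : ℝ≥0∞) (hx : x ≠ ⊤) (hy : y ≠ ⊤) :
    ENNReal.toEReal x - ENNReal.toEReal y = (((x.toReal - y.toReal : ℝ)) : EReal) := by
  have hx' : (x : EReal) = ((x.toReal : ℝ) : EReal) := by
    conv_lhs => rw [← ENNReal.ofReal_toReal hx]
    rw [EReal.coe_ennreal_ofReal, max_eq_left ENNReal.toReal_nonneg]
  have hy' : (y : EReal) = ((y.toReal : ℝ) : EReal) := by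
    conv_lhs => rw [← ENNReal.ofReal_toReal hy]
    rw [EReal.coe_ennreal_ofReal, max_eq_left ENNReal.toReal_nonneg]
  rw [hx', hy', ← EReal.coe_sub]

def discMeas (Z : Multiset ℂ) : Measure ℂ :=
  ((Multiset.card Z : ℝ≥0∞))⁻¹ • ((Z.map Measure.dirac).sum)

lemma msum_measure_apply (m : Multiset ℂ) (s : Set ℂ) :
    ((m.map Measure.dirac).sum) s = (m.map fun z => Measure.dirac z s).sum := by
  induction m using Multiset.induction_on with
  | empty => simp
  | cons z m ih => simp [Measure.add_apply, ih]

lemma lint_msum {α : Type*} [MeasurableSpace α] [MeasurableSingletonClass α]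
    (m : Multiset α) (f : α → ℝ≥0∞) :
    ∫⁻ x, f x ∂((m.map Measure.dirac).sum) = (m.map f).sum := by
  induction m using Multiset.induction_on with
  | empty => simp
  | cons z m ih => simp [lintegral_add_measure, ih, lintegral_dirac]

lemma discMeas_prob (Z : Multiset ℂ) (hZ : Z ≠ 0) : IsProbabilityMeasure (discMeas Z) := by
  constructor
  rw [discMeas, Measure.smul_apply, msum_measure_apply]
  have : (Z.map fun z => Measure.dirac z Set.univ).sum = (Multiset.card Z : ℝ≥0∞) := by
    have : ∀ z ∈ Z, Measure.dirac z Set.univ = 1 := fun z _ => by simp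
    rw [congrArg Multiset.sum (Multiset.map_congr rfl this)]
    simp [Multiset.map_const', Multiset.sum_replicate]
  rw [this, smul_eq_mul]
  apply ENNReal.inv_mul_cancel
  · simp only [ne_eq, Nat.cast_eq_zero, Multiset.card_eq_zero]
    exact hZ
  · exact ENNReal.natCast_ne_top _

lemma discMeas_null (Z : Multiset ℂ) (K : Set ℂ) (hK : MeasurableSet K)
    (hZK : ∀ z ∈ Z, z ∈ K) : discMeas Z Kᶜ = 0 := by
  rw [discMeas, Measure.smul_apply, msum_measure_apply]
  have : ∀ z ∈ Z, Measure.dirac z Kᶜ = 0 := fun z hz => by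
    rw [Measure.dirac_apply' _ hK.compl]
    simp [hZK z hz]
  rw [congrArg Multiset.sum (Multiset.map_congr rfl this)]
  simp

lemma discMeas_energy (Z : Multiset ℂ) (hZ : Z ≠ 0) :
    energyI (discMeas Z) =
      ((((Multiset.card Z : ℝ))⁻¹ ^ 2 *
        (Z.map fun z => (Z.map fun w => logKer z w).sum).sum : ℝ) : EReal) := by
  set c : ℝ≥0∞ := ((Multiset.card Z : ℝ≥0∞))⁻¹ with hc
  have hcne : c ≠ ⊤ := by
    rw [hc]
    simp [ENNReal.inv_ne_top, hZ]
  have hintf : ∀ g : ℂ → ℂ → ℝ, Measurable (fun q : ℂ × ℂ => g q.1 q.2) →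
      ∫⁻ q : ℂ × ℂ, ENNReal.ofReal (g q.1 q.2) ∂((discMeas Z).prod (discMeas Z))
        = c * (c * (Z.map fun z => (Z.map fun w => ENNReal.ofReal (g z w)).sum).sum) := by
    intro g hg
    haveI := discMeas_prob Z hZ
    rw [lintegral_prod _ (by
      exact (ENNReal.measurable_ofReal.comp hg).aemeasurable)]
    have hinner : ∀ z : ℂ, (∫⁻ y, ENNReal.ofReal (g z y) ∂(discMeas Z))
        = c * (Z.map fun w => ENNReal.ofReal (g z w)).sum := by
      intro z
      rw [discMeas, lintegral_smul_measure, lint_msum, smul_eq_mul]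
    have houter : (fun x => ∫⁻ y, ENNReal.ofReal (g (x, y).1 (x, y).2) ∂(discMeas Z))
        = fun x => c * (Z.map fun w => ENNReal.ofReal (g x w)).sum := by
      funext x; exact hinner x
    rw [houter, discMeas, lintegral_smul_measure, lint_msum, msum_const_mul, smul_eq_mul]
  have hpos := hintf logKer measurable_logKer
  have hneg := hintf (fun z w => -(logKer z w)) measurable_logKer.neg
  rw [energyI, mutualEnergy, hpos, hneg]
  have hSp : (Z.map fun z => (Z.map fun w => ENNReal.ofReal (logKer z w)).sum).sum ≠ ⊤ :=
    msum_ne_top _ _ fun z _ => msum_ne_top _ _ fun w _ => ENNReal.ofReal_ne_top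
  have hSn : (Z.map fun z => (Z.map fun w => ENNReal.ofReal (-(logKer z w))).sum).sum ≠ ⊤ :=
    msum_ne_top _ _ fun z _ => msum_ne_top _ _ fun w _ => ENNReal.ofReal_ne_top
  rw [ereal_sub_coe _ _ (by finiteness) (by finiteness)]
  congr 1
  rw [ENNReal.toReal_mul, ENNReal.toReal_mul, ENNReal.toReal_mul, ENNReal.toReal_mul]
  have hcr : c.toReal = ((Multiset.card Z : ℝ))⁻¹ := by
    rw [hc, ENNReal.toReal_inv]
    simp
  rw [hcr]
  rw [msum_toReal _ _ (fun z _ => msum_ne_top _ _ fun w _ => ENNReal.ofReal_ne_top),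
    msum_toReal _ _ (fun z _ => msum_ne_top _ _ fun w _ => ENNReal.ofReal_ne_top)]
  have : ∀ z : ℂ, ((Z.map fun w => ENNReal.ofReal (logKer z w)).sum).toReal
      - ((Z.map fun w => ENNReal.ofReal (-(logKer z w))).sum).toReal
      = (Z.map fun w => logKer z w).sum := by
    intro z
    rw [msum_toReal _ _ (fun w _ => ENNReal.ofReal_ne_top),
      msum_toReal _ _ (fun w _ => ENNReal.ofReal_ne_top), msum_sub]
    exact congrArg Multiset.sum (Multiset.map_congr rfl fun w _ => tor_sub _)
  have hfin : ∀ z ∈ Z, ((Z.map fun w => ENNReal.ofReal (logKer z w)).sum) ≠ ⊤ :=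
    fun z _ => msum_ne_top _ _ fun w _ => ENNReal.ofReal_ne_top
  rw [← mul_sub, ← mul_sub, msum_sub,
    congrArg Multiset.sum (Multiset.map_congr rfl fun z _ => this z)]
  ring

lemma discMeas_energy_log (Z : Multiset ℂ) (hZ : Z ≠ 0) (hnd : Z.Nodup) :
    (Z.map fun z => (Z.map fun w => logKer z w).sum).sum
      = - Real.log ((Z.map fun z =>
          ((Z.erase z).map fun w => Complex.abs (z - w)).prod).prod) := by
  have hin : ∀ z ∈ Z, (Z.map fun w => logKer z w).sum
      = - Real.log (((Z.erase z).map fun w => Complex.abs (z - w)).prod) := by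
    intro z hz
    have hz0 : logKer z z = 0 := by
      rw [logKer, dist_self]
      simp
    conv_lhs => rw [← Multiset.cons_erase hz]
    rw [Multiset.map_cons, Multiset.sum_cons, hz0, zero_add]
    have hner : ∀ w ∈ Z.erase z, Complex.abs (z - w) ≠ 0 := by
      intro w hw
      have hwZ : w ≠ z := by
        intro he
        rw [he] at hw
        exact (Multiset.Nodup.notMem_erase hnd) hw
      intro h0
      rw [_root_.map_eq_zero, sub_eq_zero] at h0
      exact hwZ h0.symm
    rw [mlog_prod _ (by
      intro x hx
      obtain ⟨w, hw, rfl⟩ := Multiset.mem_map.1 hx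
      exact hner w hw), Multiset.map_map]
    rw [← msum_neg]
    apply congrArg Multiset.sum (Multiset.map_congr rfl fun w hw => ?_)
    rw [logKer, Complex.dist_eq, one_div, Real.log_inv]
    rfl
  rw [congrArg Multiset.sum (Multiset.map_congr rfl hin), msum_neg]
  congr 1
  rw [mlog_prod _ (by
    intro x hx
    obtain ⟨z, hz, rfl⟩ := Multiset.mem_map.1 hx
    apply ne_of_gt
    apply Multiset.prod_pos
    intro y hy
    obtain ⟨w, hw, rfl⟩ := Multiset.mem_map.1 hy
    have hwZ : w ≠ z := by
      intro he
      rw [he] at hw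
      exact (Multiset.Nodup.notMem_erase hnd) hw
    apply AbsoluteValue.pos
    exact sub_ne_zero.2 fun he => hwZ he.symm), Multiset.map_map]
  rfl

lemma eqEnergy_le (K : Set ℂ) (μ : Measure ℂ) (h1 : IsProbabilityMeasure μ)
    (h2 : μ Kᶜ = 0) : eqEnergy K ≤ energyI μ := by
  rw [eqEnergy]
  exact iInf_le_of_le μ (iInf_le_of_le h1 (iInf_le_of_le h2 (le_refl _)))


lemma lemniscate_closed {d : ℕ} (a p : Fin d → ℂ) : IsClosed (lemniscate a p 1) := by
  rw [← isOpen_compl_iff]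
  have hU : IsOpen ((Set.range p)ᶜ) := (Set.finite_range p).isClosed.isOpen_compl
  have hcont : ContinuousOn (fun z => Complex.abs (ratSum a p z)) ((Set.range p)ᶜ) := by
    apply Continuous.comp_continuousOn Complex.continuous_abs
    apply continuousOn_finset_sum
    intro i _
    apply ContinuousOn.div continuousOn_const (by fun_prop)
    intro z hz
    exact sub_ne_zero.2 fun he => hz ⟨i, he.symm⟩
  have hset : (lemniscate a p 1)ᶜ
      = (Set.range p)ᶜ ∩ ((fun z => Complex.abs (ratSum a p z)) ⁻¹' (Set.Iio 1)) := by
    ext z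
    simp [lemniscate, not_or, not_le, Complex.norm_eq_abs]
  rw [hset]
  exact hcont.isOpen_inter_preimage hU isOpen_Iio

lemma lemniscate_bounded {d : ℕ} (a p : Fin d → ℂ) :
    lemniscate a p 1 ⊆ closedBall 0 (∑ i, Complex.abs (a i) + ∑ i, Complex.abs (p i) + 1) := by
  set SA := ∑ i, Complex.abs (a i) with hSA
  set SP := ∑ i, Complex.abs (p i) with hSP
  have hSA0 : 0 ≤ SA := Finset.sum_nonneg fun i _ => AbsoluteValue.nonneg _ _
  have hSP0 : 0 ≤ SP := Finset.sum_nonneg fun i _ => AbsoluteValue.nonneg _ _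
  intro z hz
  rw [mem_closedBall, dist_zero_right]
  by_contra habs
  push_neg at habs
  have hz1 : ∀ i, Complex.abs (p i) ≤ SP := fun i =>
    Finset.single_le_sum (f := fun i => Complex.abs (p i))
      (fun i _ => AbsoluteValue.nonneg _ _) (Finset.mem_univ i)
  have hnr : z ∉ Set.range p := by
    rintro ⟨i, rfl⟩
    have := hz1 i
    rw [Complex.norm_eq_abs] at habs
    linarith
  have hlow : ∀ i, SA + 1 ≤ Complex.abs (z - p i) := by
    intro i
    have h1 : Complex.abs z - Complex.abs (p i) ≤ Complex.abs (z - p i) := by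
      have := norm_sub_norm_le z (p i)
      simpa [Complex.norm_eq_abs] using this
    have := hz1 i
    rw [Complex.norm_eq_abs] at habs
    linarith
  have hineq : Complex.abs (ratSum a p z) < 1 := by
    have h1 : Complex.abs (ratSum a p z) ≤ ∑ i, Complex.abs (a i / (z - p i)) :=
      Complex.abs.sum_le _ _
    have h2 : ∀ i, Complex.abs (a i / (z - p i)) ≤ Complex.abs (a i) / (SA + 1) := by
      intro i
      rw [map_div₀]
      exact div_le_div_of_nonneg_left (AbsoluteValue.nonneg _ _) (by linarith) (hlow i)
    calc Complex.abs (ratSum a p z) ≤ ∑ i, Complex.abs (a i / (z - p i)) := h1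
      _ ≤ ∑ i, Complex.abs (a i) / (SA + 1) := Finset.sum_le_sum fun i _ => h2 i
      _ = SA / (SA + 1) := by rw [← Finset.sum_div]
      _ < 1 := by
          rw [div_lt_one (by linarith)]
          linarith
  rcases hz with hz | hz
  · exact hnr hz
  · rw [Complex.norm_eq_abs] at hz; linarith

lemma energyI_lower (K : Set ℂ) (hK : MeasurableSet K) (M : ℝ) (hM : 0 ≤ M)
    (hKb : K ⊆ closedBall 0 M) (μ : Measure ℂ) (h1 : IsProbabilityMeasure μ)
    (h2 : μ Kᶜ = 0) :
    -((Real.log (2 * M + 1) : ℝ) : EReal) ≤ energyI μ := by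
  set L := Real.log (2 * M + 1) with hLdef
  have hL0 : 0 ≤ L := Real.log_nonneg (by linarith)
  have hae : ∀ᵐ q : ℂ × ℂ ∂(μ.prod μ), q.1 ∈ K ∧ q.2 ∈ K := by
    have hsub : {q : ℂ × ℂ | ¬(q.1 ∈ K ∧ q.2 ∈ K)}
        ⊆ (Kᶜ ×ˢ (Set.univ : Set ℂ)) ∪ ((Set.univ : Set ℂ) ×ˢ Kᶜ) := by
      intro q hq
      simp only [Set.mem_setOf_eq, not_and_or] at hq
      rcases hq with hq | hq
      · exact Or.inl ⟨hq, Set.mem_univ _⟩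
      · exact Or.inr ⟨Set.mem_univ _, hq⟩
    rw [ae_iff]
    apply measure_mono_null hsub
    apply measure_union_null
    · rw [Measure.prod_prod, h2, zero_mul]
    · rw [Measure.prod_prod, h2, mul_zero]
  have hbd : ∫⁻ q : ℂ × ℂ, ENNReal.ofReal (-(logKer q.1 q.2)) ∂(μ.prod μ)
      ≤ ENNReal.ofReal L := by
    have hpt : ∀ᵐ q : ℂ × ℂ ∂(μ.prod μ),
        ENNReal.ofReal (-(logKer q.1 q.2)) ≤ ENNReal.ofReal L := by
      filter_upwards [hae] with q hq
      apply ENNReal.ofReal_le_ofReal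
      have hd1 : dist q.1 (0:ℂ) ≤ M := by
        have := hKb hq.1; rwa [mem_closedBall] at this
      have hd2 : dist q.2 (0:ℂ) ≤ M := by
        have := hKb hq.2; rwa [mem_closedBall] at this
      have hdist : dist q.1 q.2 ≤ 2 * M := by
        calc dist q.1 q.2 ≤ dist q.1 0 + dist (0:ℂ) q.2 := dist_triangle _ _ _
          _ ≤ M + M := add_le_add hd1 (by rwa [dist_comm])
          _ = 2 * M := by ring
      have hneg : -(logKer q.1 q.2) = Real.log (dist q.1 q.2) := by
        rw [logKer, one_div, Real.log_inv, neg_neg]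
      rw [hneg]
      rcases le_total (dist q.1 q.2) 1 with hle | hle
      · calc Real.log (dist q.1 q.2) ≤ 0 := Real.log_nonpos dist_nonneg hle
          _ ≤ L := hL0
      · apply Real.log_le_log (by linarith)
        linarith
    calc ∫⁻ q : ℂ × ℂ, ENNReal.ofReal (-(logKer q.1 q.2)) ∂(μ.prod μ)
        ≤ ∫⁻ _ : ℂ × ℂ, ENNReal.ofReal L ∂(μ.prod μ) := lintegral_mono_ae hpt
      _ = ENNReal.ofReal L := by
          haveI : IsProbabilityMeasure (μ.prod μ) := by infer_instance
          rw [lintegral_const, measure_univ, mul_one]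
  rw [energyI, mutualEnergy]
  have hA : (0 : EReal) ≤ ENNReal.toEReal
      (∫⁻ q : ℂ × ℂ, ENNReal.ofReal (logKer q.1 q.2) ∂(μ.prod μ)) :=
    EReal.coe_ennreal_nonneg _
  have hB : ENNReal.toEReal (∫⁻ q : ℂ × ℂ, ENNReal.ofReal (-(logKer q.1 q.2)) ∂(μ.prod μ))
      ≤ ((L : ℝ) : EReal) := by
    calc ENNReal.toEReal (∫⁻ q : ℂ × ℂ, ENNReal.ofReal (-(logKer q.1 q.2)) ∂(μ.prod μ))
        ≤ ENNReal.toEReal (ENNReal.ofReal L) := by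
          exact_mod_cast hbd
      _ = ((L : ℝ) : EReal) := by
          rw [EReal.coe_ennreal_ofReal, max_eq_left hL0]
  calc -((L : ℝ) : EReal) = 0 - ((L : ℝ) : EReal) := by rw [zero_sub]
    _ ≤ _ := EReal.sub_le_sub hA hB

lemma eqEnergy_lower (K : Set ℂ) (hK : MeasurableSet K) (M : ℝ) (hM : 0 ≤ M)
    (hKb : K ⊆ closedBall 0 M) :
    -((Real.log (2 * M + 1) : ℝ) : EReal) ≤ eqEnergy K := by
  rw [eqEnergy]
  exact le_iInf fun μ => le_iInf fun h1 => le_iInf fun h2 =>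
    energyI_lower K hK M hM hKb μ h1 h2


lemma Rabs_pos {d : ℕ} (a p : Fin d → ℂ) (ha : ∀ i, a i ≠ 0) (hp : Function.Injective p) :
    0 < Rabs a p := by
  rw [Rabs]
  exact Finset.prod_pos fun i _ => AbsoluteValue.pos _ (Pp_eval_pole_ne_zero a p ha hp i)

lemma Rabs_eq {d : ℕ} (a p : Fin d → ℂ) :
    (∏ i, ∏ j ∈ Finset.univ.filter (· ≠ i), Complex.abs (p i - p j)) * ∏ i, Complex.abs (a i)
      = Rabs a p := by
  rw [Rabs, ← Finset.prod_mul_distrib]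
  apply Finset.prod_congr rfl
  intro i _
  rw [Pp_eval_pole a p i, map_mul, map_prod]
  rw [show (Finset.univ.filter (· ≠ i)) = Finset.univ.erase i from Finset.filter_ne' _ _]
  ring

lemma Babs_pos {d : ℕ} (a p : Fin d → ℂ) (ha : ∀ i, a i ≠ 0) (hp : Function.Injective p) :
    0 < Babs a p := by
  rw [Babs]
  apply mprod_pos
  intro x hx
  obtain ⟨β, hβ, rfl⟩ := Multiset.mem_map.1 hx
  exact AbsoluteValue.pos _ (Qp_eval_roots_P_ne_zero a p ha hp β hβ)

lemma BWabs_pos {d : ℕ} (a p : Fin d → ℂ) (ha : ∀ i, a i ≠ 0) (hp : Function.Injective p) :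
    0 < BWabs a p := by
  rw [BWabs]
  apply mprod_pos
  intro x hx
  obtain ⟨τ, hτ, rfl⟩ := Multiset.mem_map.1 hx
  exact AbsoluteValue.pos _ (Qp_eval_roots_W_ne_zero a p ha hp τ hτ)


end CapLem
end

open CapLem in
/-- If `R = ∑ i, a i / (z - p i)` is a `d`-good rational function with
lemniscate `K = {z : |R z| ≥ 1}`, then
`cap K ≥ (∏_{i ≠ j} |p i - p j| * ∏ i, |a i|) ^ (1/d²)`. -/
theorem capacity_lemniscate_lower_bound
    (d : ℕ) (hd : 0 < d) (a p : Fin d → ℂ) (h : IsGoodRat d a p) :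
    ((∏ i, ∏ j ∈ Finset.univ.filter (· ≠ i), ‖p i - p j‖) *
        ∏ i, ‖a i‖) ^ (((d : ℝ) ^ 2)⁻¹)
      ≤ logCap (lemniscate a p 1) := by
  have ha : ∀ i, a i ≠ 0 := h.residue_ne
  have hp : Function.Injective p := h.poles_inj

  set K := lemniscate a p 1 with hKdef
  have hKm : MeasurableSet K := (lemniscate_closed a p).measurableSet
  set M : ℝ := ∑ i, Complex.abs (a i) + ∑ i, Complex.abs (p i) + 1 with hMdef
  have hM0 : 0 ≤ M := by
    rw [hMdef]
    have h1 : 0 ≤ ∑ i, Complex.abs (a i) := Finset.sum_nonneg fun i _ => AbsoluteValue.nonneg _ _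
    have h2 : 0 ≤ ∑ i, Complex.abs (p i) := Finset.sum_nonneg fun i _ => AbsoluteValue.nonneg _ _
    linarith
  have hgebot := eqEnergy_lower K hKm M hM0 (lemniscate_bounded a p)
  have hRpos : 0 < Rabs a p := Rabs_pos a p ha hp
  obtain ⟨r, hr, hfarall⟩ := exists_unimodular_far (Multiset.card ((Wp a p).roots))
  have hLP : 0 < Complex.abs (Pp a p).leadingCoeff :=
    AbsoluteValue.pos _ (leadingCoeff_ne_zero.2 (Pp_ne_zero a p hd ha hp))
  have hLW : 0 < Complex.abs (Wp a p).leadingCoeff :=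
    AbsoluteValue.pos _ (leadingCoeff_ne_zero.2 (Wp_ne_zero a p hd ha hp))
  have hBabs : 0 < Babs a p := Babs_pos a p ha hp
  have hBW : 0 < BWabs a p := BWabs_pos a p ha hp
  set κ₁ : ℝ := (Complex.abs (Wp a p).leadingCoeff ^ d * BWabs a p)
      / (Complex.abs (Pp a p).leadingCoeff ^ d * Babs a p) with hκ₁def
  set κ₂ : ℝ := r ^ (Multiset.card ((Wp a p).roots)) with hκ₂def
  have hκ₁pos : 0 < κ₁ := by rw [hκ₁def]; positivity
  have hκ₂pos : 0 < κ₂ := pow_pos hr _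
  set L₁ : ℝ := Real.log (Rabs a p) with hL₁
  set L₂ : ℝ := Real.log κ₁ with hL₂
  set L₃ : ℝ := Real.log κ₂ with hL₃
  set e : ℕ → ℝ := fun n =>
    (((n * d : ℕ) : ℝ))⁻¹ ^ 2 * (-(((n:ℝ) * ((n:ℝ) - 1)) * L₁ + (n:ℝ) * L₂ + L₃)) with he
  have key : ∀ n : ℕ, 1 ≤ n → eqEnergy K ≤ ((e n : ℝ) : EReal) := by
    intro n hn
    obtain ⟨lam, hlam, hfar0⟩ := hfarall
      (((Wp a p).roots).map fun τ => (Pp a p).eval τ ^ n / (Qp p).eval τ ^ n)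
      (by rw [Multiset.card_map]; omega)
    have hfar : ∀ τ ∈ (Wp a p).roots,
        r ≤ dist lam ((Pp a p).eval τ ^ n / (Qp p).eval τ ^ n) :=
      fun τ hτ => hfar0 _ (Multiset.mem_map_of_mem _ hτ)
    have hVge := realV_ge a p hd ha hp n hn hlam r hr hfar
    have hVpos := realV_pos a p hd ha hp n hn hlam r hr hfar
    have hnd := nodup_Zn a p n lam (ne_of_gt hVpos)
    have hcard := Zn_card a p hd n hn hlam
    have hZne : Zn a p n lam ≠ 0 := by
      intro h0
      rw [h0] at hcard
      simp only [Multiset.card_zero] at hcard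
      exact (Nat.mul_ne_zero (by omega) (by omega)) hcard.symm
    calc eqEnergy K ≤ energyI (discMeas (Zn a p n lam)) :=
          eqEnergy_le K _ (discMeas_prob _ hZne)
            (discMeas_null _ K hKm fun z hz => root_mem_lemniscate a p ha hp n hn hlam hz)
      _ = _ := discMeas_energy _ hZne
      _ ≤ ((e n : ℝ) : EReal) := by
          apply EReal.coe_le_coe_iff.2
          rw [discMeas_energy_log _ hZne hnd, hcard, he]
          apply mul_le_mul_of_nonneg_left _ (by positivity)
          have hlogV : ((n:ℝ) * ((n:ℝ) - 1)) * L₁ + (n:ℝ) * L₂ + L₃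
              ≤ Real.log (realV a p n lam) := by
            have hstep : Real.log (Rabs a p ^ (n * (n-1)) * κ₁ ^ n * κ₂)
                = ((n:ℝ) * ((n:ℝ) - 1)) * L₁ + (n:ℝ) * L₂ + L₃ := by
              rw [Real.log_mul (by positivity) (by positivity),
                Real.log_mul (by positivity) (by positivity),
                Real.log_pow, Real.log_pow]
              rw [hL₁, hL₂, hL₃]
              have : ((n * (n-1) : ℕ) : ℝ) = (n:ℝ) * ((n:ℝ) - 1) := by
                push_cast [Nat.cast_sub hn]
                ring
              rw [this]
            rw [← hstep]
            apply Real.log_le_log (by positivity)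
            exact hVge
          have hrv : realV a p n lam
              = ((Zn a p n lam).map fun z =>
                  (((Zn a p n lam).erase z).map fun w => Complex.abs (z - w)).prod).prod := rfl
          rw [← hrv]
          linarith
  have hne_top : eqEnergy K ≠ ⊤ :=
    ne_top_of_le_ne_top (EReal.coe_ne_top (e 1)) (key 1 (le_refl 1))
  have hne_bot : eqEnergy K ≠ ⊥ := by
    intro h0
    rw [h0] at hgebot
    have : -((Real.log (2 * M + 1) : ℝ) : EReal) = ((-(Real.log (2*M+1)) : ℝ) : EReal) := by
      rw [EReal.coe_neg]
    rw [this] at hgebot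
    exact (EReal.coe_ne_bot _) (le_bot_iff.1 hgebot)
  have htr : ∀ n : ℕ, 1 ≤ n → (eqEnergy K).toReal ≤ e n := by
    intro n hn
    have := EReal.toReal_le_toReal (key n hn) hne_bot (EReal.coe_ne_top _)
    simpa using this
  have hd2 : (0:ℝ) < (d:ℝ)^2 := by positivity
  set g : ℝ → ℝ := fun x =>
    -L₁/(d:ℝ)^2 + ((L₁ - L₂)/(d:ℝ)^2) * x - (L₃/(d:ℝ)^2) * x^2 with hg
  have hgcont : Continuous g := by fun_prop
  have hg0 : g 0 = -L₁/(d:ℝ)^2 := by simp [hg]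
  have ht : Tendsto (fun n : ℕ => g (1/(n:ℝ))) atTop (𝓝 (-L₁/(d:ℝ)^2)) := by
    rw [← hg0]
    exact (hgcont.tendsto 0).comp tendsto_one_div_atTop_nhds_zero_nat
  have heg : ∀ᶠ n : ℕ in atTop, g (1/(n:ℝ)) = e n := by
    rw [eventually_atTop]
    refine ⟨1, fun n hn => ?_⟩
    have hn0 : ((n:ℝ)) ≠ 0 := by
      have : (0:ℝ) < n := by exact_mod_cast hn
      linarith
    have hd0 : ((d:ℝ)) ≠ 0 := by
      have : (0:ℝ) < d := by exact_mod_cast hd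
      linarith
    rw [he, hg]
    push_cast
    field_simp
    ring
  have hlim : Tendsto (fun n : ℕ => e n) atTop (𝓝 (-L₁/(d:ℝ)^2)) := ht.congr' heg
  have hfinal : (eqEnergy K).toReal ≤ -L₁/(d:ℝ)^2 :=
    ge_of_tendsto hlim (eventually_atTop.2 ⟨1, htr⟩)
  rw [logCap, if_neg hne_top]
  change ((∏ i, ∏ j ∈ Finset.univ.filter (· ≠ i), Complex.abs (p i - p j)) *
      ∏ i, Complex.abs (a i)) ^ (((d : ℝ) ^ 2)⁻¹) ≤ _
  rw [Rabs_eq a p, Real.rpow_def_of_pos hRpos]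
  apply Real.exp_le_exp.2
  have h1 : Real.log (Rabs a p) * ((d:ℝ)^2)⁻¹ = L₁ / (d:ℝ)^2 := by
    rw [hL₁, div_eq_mul_inv]
  have h2 : -L₁/(d:ℝ)^2 = -(L₁/(d:ℝ)^2) := by ring
  rw [h1]
  rw [h2] at hfinal
  linarith
end

section
/- Let a > 0 and η ∈ (2/3, 1), and for p > 1 define R_p(z) := a/(z − p) + (p − p^η)/(z − ip) + (p − p^η)/(z + ip). Then there exists p_0 = p_0(a, η) such that for all p > p_0, every critical point c of R_p (i.e. every c ∈ ℂ with R_p'(c) = 0) satisfies |R_p(c)| < 1. -/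
open MeasureTheory Metric Complex Set Topology Filter OnePoint
open scoped Classical

noncomputable section

/-- The residues of the rational function `R_p` of the counterexample. -/
def aVec (a η p : ℝ) : Fin 3 → ℂ :=
  ![(a : ℂ), ((p - p ^ η : ℝ) : ℂ), ((p - p ^ η : ℝ) : ℂ)]

/-- The poles `p`, `ip`, `-ip` of the rational function `R_p` of the counterexample. -/
def pVec (p : ℝ) : Fin 3 → ℂ :=
  ![(p : ℂ), (p : ℂ) * Complex.I, -((p : ℂ) * Complex.I)]

/-- `R_p(z) = a/(z-p) + (p-p^η)/(z-ip) + (p-p^η)/(z+ip)`. -/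
def Rpfun (a η p : ℝ) (z : ℂ) : ℂ :=
  (a : ℂ) / (z - (p : ℂ)) + ((p - p ^ η : ℝ) : ℂ) / (z - (p : ℂ) * Complex.I)
    + ((p - p ^ η : ℝ) : ℂ) / (z + (p : ℂ) * Complex.I)

end

set_option maxHeartbeats 1000000

set_option maxHeartbeats 1000000 in
lemma aux_ineq (q ε s u m X : ℝ)
    (hq0 : 0 < q) (hq2 : q ≤ 1/2)
    (hε0 : 0 < ε) (hε1 : ε ≤ 1/1000)
    (hq3 : 675*ε^2 ≤ q^3)
    (hs0 : 0 ≤ s) (hu0 : 0 ≤ u) (hm0 : 0 < m) (hX0 : 0 ≤ X)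
    (heq : s^3*u = ε*m^2)
    (hmu : m ≤ s*u + 2) (hml : 2 - s*u ≤ m)
    (hus : u ≤ s + 2) (hsu : s ≤ u + 2) (h2su : 2 ≤ s + u)
    (hX1 : 2*X ≤ m^2 + s^2*(6 + 4*s + s^2))
    (hX2 : X ≤ u^2 + 2) :
    2*(1-q)*X < m^2 := by
  have hpos : 0 < s^3*u := by rw [heq]; positivity
  have hsp : 0 < s := by
    by_contra h
    push_neg at h
    have : s = 0 := le_antisymm h hs0
    rw [this] at hpos; norm_num at hpos
  have hup : 0 < u := by
    by_contra h
    push_neg at h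
    have : u = 0 := le_antisymm h hu0
    rw [this] at hpos; norm_num at hpos
  -- su ≤ 1
  have hsu1 : s*u ≤ 1 := by
    by_contra hgt
    push_neg at hgt
    have h1 : m ≤ 3*(s*u) := by linarith
    have hm2' : m^2 ≤ 9*(s*u)^2 := by
      have := mul_self_le_mul_self hm0.le h1
      linarith [this]
    have h2 : s^3*u ≤ ε*(9*(s*u)^2) := by
      rw [heq]; exact mul_le_mul_of_nonneg_left hm2' hε0.le
    have h3 : s ≤ 9*ε*u := by
      by_contra hc
      push_neg at hc
      have hk := mul_lt_mul_of_pos_left hc (mul_pos (mul_pos hsp hsp) hup)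
      linarith [h2, hk]
    have h4 : s ≤ 9*ε*(s+2) := by
      have h9 : (0:ℝ) ≤ 9*ε := by linarith
      have := mul_le_mul_of_nonneg_left hus h9
      linarith [h3, this]
    have h5 : s ≤ 1/50 := by
      have := mul_le_mul_of_nonneg_right hε1 hs0
      linarith [h4, this, hε1]
    have h6 : u ≤ 21/10 := by linarith
    have := mul_le_mul h5 h6 hu0 (by norm_num : (0:ℝ) ≤ 1/50)
    linarith [hgt, this]
  have hm3 : m ≤ 3 := by linarith
  have hm9 : s^3*u ≤ 9*ε := by
    rw [heq]
    have h1 : m^2 ≤ 9 := by linarith [mul_self_le_mul_self hm0.le hm3]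
    have := mul_le_mul_of_nonneg_left h1 hε0.le
    linarith
  rcases le_total s u with hcase | hcase
  · -- Case B : s ≤ u
    have hs4 : s^4 ≤ 9*ε := by
      have := mul_le_mul_of_nonneg_left hcase (pow_nonneg hs0 3)
      linarith [hm9, this]
    have hs32 : s ≤ 32/100 := by
      refine le_of_pow_le_pow_left₀ (by norm_num) (by norm_num) (n := 4) ?_
      norm_num
      linarith [hs4, hε1]
    have hu_lb : 168/100 ≤ u := by linarith
    have hm_ub : m ≤ 2743/1000 := by
      have := mul_le_mul hs32 hus hu0 (by norm_num : (0:ℝ) ≤ 32/100)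
      linarith [hmu, this, hs32]
    have hmsq : m^2 ≤ (2743/1000)^2 := by
      linarith [mul_self_le_mul_self hm0.le hm_ub]
    have hs3 : s^3 ≤ (45/10)*ε := by
      have h1 : s^3 * (168/100) ≤ s^3 * u := mul_le_mul_of_nonneg_left hu_lb (pow_nonneg hs0 3)
      have h2 : ε*m^2 ≤ ε*(2743/1000)^2 := mul_le_mul_of_nonneg_left hmsq hε0.le
      linarith [heq]
    have hs17 : s ≤ 17/100 := by
      refine le_of_pow_le_pow_left₀ (by norm_num) (by norm_num) (n := 3) ?_
      norm_num
      linarith [hs3, hε1]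
    have hsq : s^2 ≤ q/3 := by
      refine le_of_pow_le_pow_left₀ (by norm_num) (by positivity) (n := 3) ?_
      have h1 : s^3*s^3 ≤ ((45/10)*ε)*((45/10)*ε) :=
        mul_self_le_mul_self (pow_nonneg hs0 3) hs3
      linarith [h1, hq3, pow_pos hq0 3]
    have hsu' : s*u ≤ (17/100)*(217/100) := by
      have := mul_le_mul hs17 hus hu0 (by norm_num : (0:ℝ) ≤ 17/100)
      linarith [this, hs17]
    have hm16 : 16311/10000 ≤ m := by linarith
    have hm2 : 266/100 ≤ m^2 := by
      linarith [mul_self_le_mul_self (by norm_num : (0:ℝ) ≤ 16311/10000) hm16]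
    have e1 : 6 + 4*s + s^2 ≤ 671/100 := by
      linarith [mul_self_le_mul_self hs0 hs17]
    have e2 : 2*X ≤ m^2 + (671/100)*s^2 := by
      have h := mul_le_mul_of_nonneg_right e1 (sq_nonneg s)
      linarith [hX1, h]
    have e3 : (1-q)*(2*X) ≤ (1-q)*(m^2 + (671/100)*s^2) := by
      apply mul_le_mul_of_nonneg_left e2; linarith
    have e4 : (1-q)*((671/100)*s^2) ≤ (671/100)*(q/3) := by
      have h := mul_nonneg hq0.le (sq_nonneg s)
      linarith [hsq, h]
    have e5 : q*(266/100) ≤ q*m^2 := mul_le_mul_of_nonneg_left hm2 hq0.le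
    linarith [e3, e4, e5, hq0]
  · -- Case A : u ≤ s
    have hu4 : u^4 ≤ 9*ε := by
      have := mul_le_mul_of_nonneg_right (pow_le_pow_left₀ hu0 hcase 3) hu0
      linarith [hm9, this]
    have hu32 : u ≤ 32/100 := by
      refine le_of_pow_le_pow_left₀ (by norm_num) (by norm_num) (n := 4) ?_
      norm_num
      linarith [hu4, hε1]
    have hs_lb : 168/100 ≤ s := by linarith
    have hs_ub : s ≤ 232/100 := by linarith
    have hm_ub : m ≤ 275/100 := by
      have := mul_le_mul hs_ub hu32 hu0 (by norm_num : (0:ℝ) ≤ 232/100)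
      linarith [hmu, this]
    have hmsq : m^2 ≤ (275/100)^2 := by
      linarith [mul_self_le_mul_self hm0.le hm_ub]
    have hs3 : (474/100) ≤ s^3 := by
      have hfac : (0:ℝ) ≤ s^2 + (168/100)*s + (168/100)^2 := by positivity
      have h := mul_nonneg (sub_nonneg.2 hs_lb) hfac
      linarith [h]
    have hu_eps : u ≤ (16/10)*ε := by
      have h1 : (474/100)*u ≤ s^3*u := mul_le_mul_of_nonneg_right hs3 hu0
      have h2 : ε*m^2 ≤ ε*(275/100)^2 := mul_le_mul_of_nonneg_left hmsq hε0.le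
      linarith [heq]
    have hsu_eps : s*u ≤ (372/100)*ε := by
      have h0 : (0:ℝ) ≤ (16/10)*ε := by linarith
      have := mul_le_mul hs_ub hu_eps hu0 (by norm_num : (0:ℝ) ≤ 232/100)
      linarith [this]
    have hm_lb : 2 - (372/100)*ε ≤ m := by linarith
    have hq4 : 4*ε ≤ q := by
      refine le_of_pow_le_pow_left₀ (by norm_num) hq0.le (n := 3) ?_
      have h := mul_le_mul_of_nonneg_right hε1 (sq_nonneg ε)
      linarith [h, hq3, sq_nonneg ε]
    have hXA : X ≤ 2 + (256/100000)*ε := by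
      have h1 : u*u ≤ ((16/10)*ε)*((16/10)*ε) :=
        mul_le_mul hu_eps hu_eps hu0 (by linarith)
      have h2 := mul_le_mul_of_nonneg_right hε1 hε0.le
      linarith [hX2, h1, h2]
    have h0 : (0:ℝ) ≤ 2*(1-q) := by linarith
    have f1 := mul_le_mul_of_nonneg_left hXA h0
    have f2 : (2 - (372/100)*ε)^2 ≤ m^2 := by
      have h1 : (0:ℝ) ≤ 2 - (372/100)*ε := by linarith
      linarith [mul_self_le_mul_self h1 hm_lb]
    linarith [f1, f2, hq4, hε0, mul_nonneg hε0.le hq0.le, sq_nonneg ε]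


/-- For `a > 0` and `η ∈ (2/3, 1)`, there exists `p₀ = p₀(a,η)` such
that for all `p > p₀`, every critical point `c` of
`R_p(z) = a/(z-p) + (p-p^η)/(z-ip) + (p-p^η)/(z+ip)` satisfies `|R_p(c)| < 1`. -/
theorem counterexample_critical_values_small
    (a η : ℝ) (ha : 0 < a) (hη : η ∈ Set.Ioo (2/3 : ℝ) 1) :
    ∃ p₀ : ℝ, 1 ≤ p₀ ∧ ∀ p : ℝ, p₀ < p → ∀ c : ℂ,
      c ≠ (p : ℂ) → c ≠ (p : ℂ) * Complex.I → c ≠ -((p : ℂ) * Complex.I) →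
      deriv (Rpfun a η p) c = 0 → ‖Rpfun a η p c‖ < 1 := by
  obtain ⟨hη1, hη2⟩ := hη
  have h2x : (0:ℝ) < (2:ℝ)^((1-η)⁻¹) := Real.rpow_pos_of_pos two_pos _
  refine ⟨(2:ℝ)^((1-η)⁻¹) + 1000*a + 675*a^2 + 1, by nlinarith [sq_nonneg a], ?_⟩
  intro p hp c h1 h2 h3 hder
  have hp1 : 1 < p := by nlinarith [sq_nonneg a]
  have hp0 : (0:ℝ) < p := by linarith
  have h1η : 0 < 1 - η := by linarith
  set q : ℝ := p ^ (η - 1) with hqdef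
  have hq0 : 0 < q := Real.rpow_pos_of_pos hp0 _
  have hq2 : q ≤ 1/2 := by
    have hT : (2:ℝ)^((1-η)⁻¹) ≤ p := by nlinarith [sq_nonneg a]
    have h2p : (2:ℝ) ≤ p^(1-η) := by
      have hh := Real.rpow_le_rpow (le_of_lt h2x) hT h1η.le
      rwa [← Real.rpow_mul (by norm_num : (0:ℝ) ≤ 2), inv_mul_cancel₀ h1η.ne', Real.rpow_one] at hh
    have hrw : q = (p^(1-η))⁻¹ := by
      rw [hqdef, show η - 1 = -(1-η) by ring, Real.rpow_neg hp0.le]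
    have hppow : (0:ℝ) < p^(1-η) := Real.rpow_pos_of_pos hp0 _
    rw [hrw]
    rw [show (1:ℝ)/2 = 2⁻¹ by norm_num]
    exact inv_anti₀ two_pos h2p
  have hpη : p ^ η = p * q := by
    have hh : p ^ η = p ^ (1 + (η - 1)) := by norm_num
    rw [hh, Real.rpow_add hp0, Real.rpow_one, hqdef]
  have hbq : p - p^η = p * (1 - q) := by rw [hpη]; ring
  have hb2 : p/2 ≤ p - p^η := by nlinarith [hbq, hq2, hp0]
  have hb0 : 0 < p - p^η := by linarith
  set ε : ℝ := a / (2*(p - p^η)) with hεdef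
  have hε0 : 0 < ε := div_pos ha (by linarith)
  have hεap : ε ≤ a / p := by
    rw [hεdef, div_le_div_iff₀ (by linarith) hp0]
    nlinarith [ha.le]
  have hap : a / p ≤ 1/1000 := by
    rw [div_le_div_iff₀ hp0 (by norm_num)]
    nlinarith [sq_nonneg a]
  have hε1 : ε ≤ 1/1000 := le_trans hεap hap
  have hq3 : 675*ε^2 ≤ q^3 := by
    have hq3p : q^3 = p^(3*(η-1)) := by
      rw [hqdef, ← Real.rpow_natCast (p^(η-1)) 3, ← Real.rpow_mul hp0.le]
      norm_num
      ring_nf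
    have hmono : p ^ (-1 : ℝ) ≤ p ^ (3*(η-1)) :=
      Real.rpow_le_rpow_of_exponent_le hp1.le (by linarith)
    have hinv : p ^ (-1:ℝ) = p⁻¹ := by
      rw [show (-1:ℝ) = -(1:ℝ) by norm_num, Real.rpow_neg hp0.le, Real.rpow_one]
    have hpa : 675*a^2 ≤ p := by nlinarith [sq_nonneg a]
    have hA2 : 675*(a/p)^2 ≤ p⁻¹ := by
      rw [div_pow, ← mul_div_assoc, inv_eq_one_div, div_le_div_iff₀ (by positivity) hp0]
      nlinarith [mul_le_mul_of_nonneg_right hpa hp0.le]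
    have hA3 : ε^2 ≤ (a/p)^2 := by
      have hh := mul_self_le_mul_self hε0.le hεap
      nlinarith [hh]
    calc 675*ε^2 ≤ 675*(a/p)^2 := by linarith
      _ ≤ p⁻¹ := hA2
      _ ≤ p ^ (3*(η-1)) := by rw [← hinv]; exact hmono
      _ = q^3 := hq3p.symm
  -- complex setup
  have hp0' : (p:ℂ) ≠ 0 := by exact_mod_cast hp0.ne'
  have hcp : c - (p:ℂ) ≠ 0 := sub_ne_zero.mpr h1
  have hci : c - (p:ℂ)*Complex.I ≠ 0 := sub_ne_zero.mpr h2
  have hci' : c + (p:ℂ)*Complex.I ≠ 0 := fun h => h3 (add_eq_zero_iff_eq_neg.mp h)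
  set bc : ℂ := ((p - p ^ η : ℝ) : ℂ) with hbc
  -- derivative computation
  have d1 : HasDerivAt (fun z : ℂ => (a:ℂ)/(z - (p:ℂ))) (-(a:ℂ)/(c - (p:ℂ))^2) c := by
    have hid : HasDerivAt (fun z : ℂ => z - (p:ℂ)) 1 c := (hasDerivAt_id c).sub_const _
    have hdiv := (hasDerivAt_const c ((a:ℝ):ℂ)).div hid hcp
    exact hdiv.congr_deriv (by ring)
  have d2 : HasDerivAt (fun z : ℂ => bc/(z - (p:ℂ)*Complex.I)) (-bc/(c - (p:ℂ)*Complex.I)^2) c := by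
    have hid : HasDerivAt (fun z : ℂ => z - (p:ℂ)*Complex.I) 1 c := (hasDerivAt_id c).sub_const _
    have hdiv := (hasDerivAt_const c bc).div hid hci
    exact hdiv.congr_deriv (by ring)
  have d3 : HasDerivAt (fun z : ℂ => bc/(z + (p:ℂ)*Complex.I)) (-bc/(c + (p:ℂ)*Complex.I)^2) c := by
    have hid : HasDerivAt (fun z : ℂ => z + (p:ℂ)*Complex.I) 1 c := (hasDerivAt_id c).add_const _
    have hdiv := (hasDerivAt_const c bc).div hid hci'
    exact hdiv.congr_deriv (by ring)
  have dR : HasDerivAt (Rpfun a η p)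
      (-(a:ℂ)/(c - (p:ℂ))^2 + -bc/(c - (p:ℂ)*Complex.I)^2 + -bc/(c + (p:ℂ)*Complex.I)^2) c :=
    (d1.add d2).add d3
  have hval : -(a:ℂ)/(c - (p:ℂ))^2 + -bc/(c - (p:ℂ)*Complex.I)^2 + -bc/(c + (p:ℂ)*Complex.I)^2 = 0 := by
    rw [← dR.deriv]; exact hder
  -- I² elimination
  have hfact : (c - (p:ℂ)*Complex.I)*(c + (p:ℂ)*Complex.I) = c^2 + (p:ℂ)^2 := by
    have hh : (c - (p:ℂ)*Complex.I)*(c + (p:ℂ)*Complex.I) = c^2 - (p:ℂ)^2*Complex.I^2 := by ring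
    rw [hh, Complex.I_sq]; ring
  have hsum : c^2 + (p:ℂ)^2 ≠ 0 := hfact ▸ mul_ne_zero hci hci'
  have hpair : -bc/(c - (p:ℂ)*Complex.I)^2 + -bc/(c + (p:ℂ)*Complex.I)^2
      = -(2*bc*(c^2 - (p:ℂ)^2))/((c^2 + (p:ℂ)^2)^2) := by
    rw [div_add_div _ _ (pow_ne_zero 2 hci) (pow_ne_zero 2 hci')]
    rw [show (c - (p:ℂ)*Complex.I)^2*(c + (p:ℂ)*Complex.I)^2 = (c^2+(p:ℂ)^2)^2 by
      rw [← mul_pow, hfact]]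
    congr 1
    linear_combination (-(2*bc*(p:ℂ)^2)) * Complex.I_sq
  have hval2 : (a:ℂ)/(c-(p:ℂ))^2 + 2*bc*(c^2-(p:ℂ)^2)/((c^2+(p:ℂ)^2)^2) = 0 := by
    linear_combination -hval + hpair
  have hE : (a:ℂ)*(c^2+(p:ℂ)^2)^2 + 2*bc*(c-(p:ℂ))^3*(c+(p:ℂ)) = 0 := by
    have hkey : (a:ℂ)*(c^2+(p:ℂ)^2)^2 + 2*bc*(c-(p:ℂ))^3*(c+(p:ℂ))
        = ((a:ℂ)/(c-(p:ℂ))^2 + 2*bc*(c^2-(p:ℂ)^2)/((c^2+(p:ℂ)^2)^2))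
          * ((c-(p:ℂ))^2*(c^2+(p:ℂ)^2)^2) := by
      field_simp
      ring
    rw [hkey, hval2, zero_mul]
  -- pass to w = c/p
  set w : ℂ := c / (p:ℂ) with hwdef
  have hcw : c = (p:ℂ)*w := by rw [hwdef]; field_simp
  have hw2 : w^2 + 1 ≠ 0 := by
    intro h
    apply hsum
    have hh : c^2 + (p:ℂ)^2 = (p:ℂ)^2*(w^2+1) := by rw [hcw]; ring
    rw [hh, h, mul_zero]
  have keyW : (a:ℂ)*(w^2+1)^2 + 2*bc*(w-1)^3*(w+1) = 0 := by
    have h4 : ((p:ℂ))^4 ≠ 0 := pow_ne_zero _ hp0'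
    have h5 : (p:ℂ)^4*((a:ℂ)*(w^2+1)^2 + 2*bc*(w-1)^3*(w+1))
        = (a:ℂ)*(c^2+(p:ℂ)^2)^2 + 2*bc*(c-(p:ℂ))^3*(c+(p:ℂ)) := by rw [hcw]; ring
    have h6 : (p:ℂ)^4*((a:ℂ)*(w^2+1)^2 + 2*bc*(w-1)^3*(w+1)) = 0 := by rw [h5, hE]
    exact (mul_eq_zero.mp h6).resolve_left h4
  have ha_eqW : (a:ℂ) = -(2*bc*(w-1)^3*(w+1))/((w^2+1)^2) := by
    rw [eq_div_iff (pow_ne_zero 2 hw2)]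
    linear_combination keyW
  -- value of R at c
  have hpairR : bc/(c - (p:ℂ)*Complex.I) + bc/(c + (p:ℂ)*Complex.I) = 2*bc*c/(c^2+(p:ℂ)^2) := by
    rw [div_add_div _ _ hci hci', hfact]
    congr 1
    ring
  have hshape : Rpfun a η p c
      = (a:ℂ)/(c - (p:ℂ)) + (bc/(c - (p:ℂ)*Complex.I) + bc/(c + (p:ℂ)*Complex.I)) := by
    rw [show Rpfun a η p c
      = (a:ℂ)/(c - (p:ℂ)) + bc/(c - (p:ℂ)*Complex.I) + bc/(c + (p:ℂ)*Complex.I) from rfl]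
    ring
  have hRval : Rpfun a η p c = 2*bc*(w^2+2*w-1)/((p:ℂ)*(w^2+1)^2) := by
    rw [hshape, hpairR, ha_eqW, hcw]
    have hd1 : (p:ℂ)*w - (p:ℂ) ≠ 0 := by rw [← hcw]; exact hcp
    have hsum2 : ((p:ℂ)*w)^2 + (p:ℂ)^2 ≠ 0 := by rw [← hcw]; exact hsum
    field_simp
    ring
  -- absolute value facts
  have hm0' : 0 < ‖w^2+1‖ := norm_pos_iff.mpr hw2
  have tri : ∀ x y : ℂ, ‖x - y‖ ≤ ‖x‖ + ‖y‖ := fun x y => by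
    simpa [sub_eq_add_neg, norm_neg] using norm_add_le x (-y)
  have hmu : ‖w^2+1‖ ≤ ‖w-1‖*‖w+1‖ + 2 := by
    calc ‖w^2+1‖ = ‖(w-1)*(w+1) + 2‖ := by
          rw [show w^2+1 = (w-1)*(w+1) + 2 from by ring]
      _ ≤ ‖(w-1)*(w+1)‖ + ‖(2:ℂ)‖ := norm_add_le _ _
      _ = ‖w-1‖*‖w+1‖ + 2 := by rw [norm_mul, Complex.norm_two]
  have hml : 2 - ‖w-1‖*‖w+1‖ ≤ ‖w^2+1‖ := by
    have h := tri (w^2+1) ((w-1)*(w+1))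
    rw [show w^2+1 - (w-1)*(w+1) = 2 from by ring, Complex.norm_two, norm_mul] at h
    linarith
  have hus : ‖w+1‖ ≤ ‖w-1‖ + 2 := by
    have h := norm_add_le (w-1) 2
    rw [show (w-1)+2 = w+1 from by ring, Complex.norm_two] at h
    exact h
  have hsu : ‖w-1‖ ≤ ‖w+1‖ + 2 := by
    have h := tri (w+1) 2
    rw [show (w+1)-2 = w-1 from by ring, Complex.norm_two] at h
    exact h
  have h2su : 2 ≤ ‖w-1‖ + ‖w+1‖ := by
    have h := tri (w+1) (w-1)
    rw [show (w+1) - (w-1) = 2 from by ring, Complex.norm_two] at h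
    linarith
  have hX2 : ‖w^2+2*w-1‖ ≤ ‖w+1‖^2 + 2 := by
    have h := tri ((w+1)^2) (2:ℂ)
    rw [show (w+1)^2 - 2 = w^2+2*w-1 from by ring, Complex.norm_two, norm_pow] at h
    exact h
  have hX1 : 2*‖w^2+2*w-1‖
      ≤ ‖w^2+1‖^2
        + ‖w-1‖^2*(6 + 4*‖w-1‖ + ‖w-1‖^2) := by
    have h := tri ((w^2+1)^2) ((w-1)^2*((w-1)^2 + 4*(w-1) + 6))
    rw [show (w^2+1)^2 - (w-1)^2*((w-1)^2 + 4*(w-1) + 6) = 2*(w^2+2*w-1) from by ring,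
      norm_mul, Complex.norm_two, norm_pow, norm_mul, norm_pow] at h
    have h2 : ‖(w-1)^2 + 4*(w-1) + 6‖
        ≤ ‖w-1‖^2 + 4*‖w-1‖ + 6 := by
      calc ‖(w-1)^2 + 4*(w-1) + 6‖
          ≤ ‖(w-1)^2 + 4*(w-1)‖ + ‖(6:ℂ)‖ := norm_add_le _ _
        _ ≤ ‖(w-1)^2‖ + ‖4*(w-1)‖ + ‖(6:ℂ)‖ := by
            linarith [norm_add_le ((w-1)^2) (4*(w-1))]
        _ = ‖w-1‖^2 + 4*‖w-1‖ + 6 := by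
            rw [norm_pow, norm_mul]
            norm_num
    have h3 := mul_le_mul_of_nonneg_left h2 (sq_nonneg (‖w-1‖))
    linarith [h, h3]
  have heqR : ‖w-1‖^3*‖w+1‖ = ε*‖w^2+1‖^2 := by
    have h8 : 2*bc*((w-1)^3*(w+1)) = -((a:ℂ)*(w^2+1)^2) := by linear_combination keyW
    have h9 := congrArg norm h8
    simp only [norm_neg, norm_mul, norm_pow, Complex.norm_two, hbc,
      Complex.norm_real, Real.norm_eq_abs] at h9
    rw [abs_of_pos hb0, abs_of_pos ha] at h9
    rw [hεdef, div_mul_eq_mul_div, eq_div_iff (by positivity : (2*(p - p^η)) ≠ 0)]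
    linarith [h9]
  have habs : ‖Rpfun a η p c‖
      = 2*(p - p^η)*‖w^2+2*w-1‖/(p*‖w^2+1‖^2) := by
    rw [hRval]
    simp only [norm_div, norm_mul, norm_pow, Complex.norm_two, hbc, Complex.norm_real, Real.norm_eq_abs]
    rw [abs_of_pos hb0, abs_of_pos hp0]
  have hmain : 2*(1-q)*‖w^2+2*w-1‖ < ‖w^2+1‖^2 :=
    aux_ineq q ε _ _ _ _ hq0 hq2 hε0 hε1 hq3 (norm_nonneg _) (norm_nonneg _)
      hm0' (norm_nonneg _) heqR hmu hml hus hsu h2su hX1 hX2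
  rw [habs, div_lt_one (mul_pos hp0 (pow_pos hm0' 2)), hbq]
  nlinarith [mul_lt_mul_of_pos_left hmain hp0]
end
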